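/- arXiv:2204.00457 — 9 statements merged into one kernel-verified Lean document; each statement's English description precedes it below -/
import Mathlib

section
/- Let N ≥ 1, let U ∈ ℂ^{N×N} be invertible, and let S ∈ ℂ^{N×N} be a matrix such that for every b ∈ ℂ^N the matrix U·diag(b)·U⁻¹ can be expressed as a polynomial in S with complex coefficients. Then S is itself a graph filter, i.e. there exists a ∈ ℂ^N such that S = U·diag(a)·U⁻¹. -/
/-- If every graph filter `U * diagonal b * U⁻¹` is a polynomial in `S`,
then `S` is itself a graph filter. -/
theorem atomic_filter_is_filter (N : ℕ) (hN : 1 ≤ N)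
    (U S : Matrix (Fin N) (Fin N) ℂ) (hU : IsUnit U)
    (h : ∀ b : Fin N → ℂ, ∃ p : Polynomial ℂ,
      U * Matrix.diagonal b * U⁻¹ = Polynomial.aeval S p) :
    ∃ a : Fin N → ℂ, S = U * Matrix.diagonal a * U⁻¹ := by
  -- choose b with distinct entries
  set b : Fin N → ℂ := fun i => (i : ℂ) with hb
  obtain ⟨p, hp⟩ := h b
  -- S commutes with aeval S p
  have hcomm : S * (U * Matrix.diagonal b * U⁻¹) = (U * Matrix.diagonal b * U⁻¹) * S := by
    rw [hp]
    have h1 : S * Polynomial.aeval S p = Polynomial.aeval S (Polynomial.X * p) := by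
      simp [map_mul]
    have h2 : Polynomial.aeval S p * S = Polynomial.aeval S (p * Polynomial.X) := by
      simp [map_mul]
    rw [h1, h2, mul_comm Polynomial.X p]
  set T : Matrix (Fin N) (Fin N) ℂ := U⁻¹ * S * U with hT
  have hUdet : IsUnit U.det := (Matrix.isUnit_iff_isUnit_det U).mp hU
  have hUU : U⁻¹ * U = 1 := Matrix.nonsing_inv_mul U hUdet
  have hUU' : U * U⁻¹ = 1 := Matrix.mul_nonsing_inv U hUdet
  have e1 : ∀ M : Matrix (Fin N) (Fin N) ℂ, U⁻¹ * (U * M) = M := fun M => by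
    rw [← Matrix.mul_assoc, hUU, Matrix.one_mul]
  have e2 : ∀ M : Matrix (Fin N) (Fin N) ℂ, U * (U⁻¹ * M) = M := fun M => by
    rw [← Matrix.mul_assoc, hUU', Matrix.one_mul]
  -- T commutes with diagonal b
  have hTd : T * Matrix.diagonal b = Matrix.diagonal b * T := by
    have key : U⁻¹ * (S * (U * Matrix.diagonal b * U⁻¹)) * U
        = U⁻¹ * ((U * Matrix.diagonal b * U⁻¹) * S) * U := by rw [hcomm]
    simp only [hT, Matrix.mul_assoc, e1, e2, hUU, hUU', Matrix.mul_one] at key ⊢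
    exact key
  -- entrywise: T is diagonal
  have hdiag : T = Matrix.diagonal (fun i => T i i) := by
    ext i j
    by_cases hij : i = j
    · subst hij; simp
    · have hent := congrFun (congrFun hTd i) j
      simp [Matrix.mul_apply, Matrix.diagonal, Finset.sum_ite_eq, Finset.sum_ite_eq'] at hent
      rw [Matrix.diagonal_apply_ne _ hij]
      have hbij : b i ≠ b j := by
        simp only [hb, ne_eq, Nat.cast_inj]
        exact_mod_cast fun hc => hij (Fin.val_injective (by exact_mod_cast hc))
      have hz : T i j * (b j - b i) = 0 := by linear_combination hent
      rcases mul_eq_zero.mp hz with h' | h'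
      · exact h'
      · exact absurd ((sub_eq_zero.mp h').symm) hbij
  refine ⟨fun i => T i i, ?_⟩
  rw [← hdiag, hT]
  simp only [Matrix.mul_assoc, e2, hUU', Matrix.mul_one]
end

section
/- Let N ≥ 1, let U ∈ ℂ^{N×N} be unitary with columns u_1, …, u_N such that u_1 = (1/√N)·𝟏, where 𝟏 ∈ ℝ^N is the all-ones vector, and let a ∈ ℂ^N have pairwise distinct components. Then the atomic filter H_a = U·diag(a)·U⁻¹ is a real matrix if and only if there exist a bijection p of the set {2, …, N} onto itself and complex numbers c_2, …, c_N of unit modulus such that: a_1 ∈ ℝ, a_k = conj(a_{p(k)}) for k = 2, …, N, and u_k = c_k · conj(u_{p(k)}) for k = 2, …, N (where conj denotes entrywise complex conjugation). -/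
/-- For unitary `U` with first column `(1/√N)·𝟏` and `a` with pairwise
distinct components, the atomic filter `H_a = U * diagonal a * U⁻¹` is a real matrix iff
there exist a bijection `p` of the index set `{2, …, N}` (here the nonzero indices of
`Fin N`) and unimodular constants `c_k` with `a_1 ∈ ℝ`, `a_k = conj (a_{p(k)})` and
`u_k = c_k · conj (u_{p(k)})`. -/
theorem real_filter_iff (N : ℕ) (hN : 1 ≤ N)
    (U : Matrix (Fin N) (Fin N) ℂ) (hU : U ∈ Matrix.unitaryGroup (Fin N) ℂ)
    (hu1 : ∀ n, U n ⟨0, hN⟩ = (Real.sqrt N : ℂ)⁻¹)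
    (a : Fin N → ℂ) (ha : Function.Injective a) :
    (∀ i j, ((U * Matrix.diagonal a * U⁻¹) i j).im = 0) ↔
      ∃ (p : {k : Fin N // k ≠ ⟨0, hN⟩} ≃ {k : Fin N // k ≠ ⟨0, hN⟩})
        (c : {k : Fin N // k ≠ ⟨0, hN⟩} → ℂ),
        (∀ k, ‖c k‖ = 1) ∧
        (a ⟨0, hN⟩).im = 0 ∧
        (∀ k : {k : Fin N // k ≠ ⟨0, hN⟩}, a k.1 = star (a (p k).1)) ∧
        (∀ k : {k : Fin N // k ≠ ⟨0, hN⟩}, ∀ n, U n k.1 = c k * star (U n (p k).1)) := by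
  classical
  set z : Fin N := ⟨0, hN⟩ with hzdef
  have hUU : U.conjTranspose * U = 1 := by
    simpa [Matrix.star_eq_conjTranspose] using (Matrix.mem_unitaryGroup_iff'.mp hU)
  have hUU' : U * U.conjTranspose = 1 := by
    simpa [Matrix.star_eq_conjTranspose] using (Matrix.mem_unitaryGroup_iff.mp hU)
  have hUinv : U⁻¹ = U.conjTranspose := Matrix.inv_eq_right_inv hUU'
  -- the real first column
  have huz : ∀ n, star (U n z) = U n z := by
    intro n
    rw [hu1 n]
    simp [← Complex.ofReal_inv]
  -- entries of H
  have hH : ∀ i j, (U * Matrix.diagonal a * U⁻¹) i j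
      = ∑ k, U i k * a k * star (U j k) := by
    intro i j
    rw [hUinv, Matrix.mul_apply]
    apply Finset.sum_congr rfl
    intro k _
    rw [Matrix.mul_diagonal, Matrix.conjTranspose_apply]
  constructor
  · intro h
    set W : Matrix (Fin N) (Fin N) ℂ := U.map (starRingEnd ℂ) with hWdef
    have hWH : W.conjTranspose = U.transpose := by
      ext i j
      simp [hWdef, Matrix.conjTranspose_apply, Matrix.map_apply, Matrix.transpose_apply]
    have hWW : W.conjTranspose * W = 1 := by
      rw [hWH]
      have : U.transpose * W = (U.conjTranspose * U).map (starRingEnd ℂ) := by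
        rw [Matrix.map_mul]
        congr 1
        ext i j
        simp [Matrix.conjTranspose_apply, Matrix.transpose_apply, Matrix.map_apply]
      rw [this, hUU]
      all_goals simp [Matrix.map_one]
    have hWW' : W * W.conjTranspose = 1 := by
      rw [hWH]
      have : W * U.transpose = (U * U.conjTranspose).map (starRingEnd ℂ) := by
        rw [Matrix.map_mul]
        congr 1
        ext i j
        simp [Matrix.conjTranspose_apply, Matrix.transpose_apply, Matrix.map_apply]
      rw [this, hUU']
      all_goals simp [Matrix.map_one]
    set V : Matrix (Fin N) (Fin N) ℂ := U.conjTranspose * W with hVdef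
    -- conjugated filter equation
    have hHc : W * Matrix.diagonal (fun k => star (a k)) * W.conjTranspose
        = U * Matrix.diagonal a * U.conjTranspose := by
      have hmap : (U * Matrix.diagonal a * U.conjTranspose).map (starRingEnd ℂ)
          = W * Matrix.diagonal (fun k => star (a k)) * W.conjTranspose := by
        rw [Matrix.map_mul, Matrix.map_mul, Matrix.diagonal_map (map_zero _)]
        congr 1
      rw [← hmap]
      ext i j
      simp only [Matrix.map_apply, starRingEnd_apply]
      have := h i j
      rw [hUinv] at this
      exact (Complex.conj_eq_iff_im.mpr this)
    -- intertwining: diagonal a * V = V * diagonal (star ∘ a)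
    have hDV : Matrix.diagonal a * V = V * Matrix.diagonal (fun k => star (a k)) := by
      have h1 : U.conjTranspose * (U * Matrix.diagonal a * U.conjTranspose) * W
          = Matrix.diagonal a * V := by
        rw [hVdef]
        calc U.conjTranspose * (U * Matrix.diagonal a * U.conjTranspose) * W
            = (U.conjTranspose * U) * Matrix.diagonal a * (U.conjTranspose * W) := by
              noncomm_ring
          _ = Matrix.diagonal a * (U.conjTranspose * W) := by rw [hUU, Matrix.one_mul]
      have h2 : U.conjTranspose * (W * Matrix.diagonal (fun k => star (a k)) * W.conjTranspose) * W
          = V * Matrix.diagonal (fun k => star (a k)) := by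
        rw [hVdef]
        calc U.conjTranspose * (W * Matrix.diagonal (fun k => star (a k)) * W.conjTranspose) * W
            = (U.conjTranspose * W) * Matrix.diagonal (fun k => star (a k)) * (W.conjTranspose * W) := by
              noncomm_ring
          _ = (U.conjTranspose * W) * Matrix.diagonal (fun k => star (a k)) := by
              rw [hWW, Matrix.mul_one]
      rw [← h1, ← h2, hHc]
    have hrel : ∀ k l, V k l ≠ 0 → a k = star (a l) := by
      intro k l hkl
      have := congrFun (congrFun hDV k) l
      rw [Matrix.diagonal_mul, Matrix.mul_diagonal] at this
      have h' : (a k - star (a l)) * V k l = 0 := by linear_combination this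
      rcases mul_eq_zero.mp h' with h'' | h''
      · exact sub_eq_zero.mp h''
      · exact absurd h'' hkl
    -- V is unitary, row sums
    have hVV' : V * V.conjTranspose = 1 := by
      rw [hVdef, Matrix.conjTranspose_mul, Matrix.conjTranspose_conjTranspose]
      calc U.conjTranspose * W * (W.conjTranspose * U)
          = U.conjTranspose * (W * W.conjTranspose) * U := by noncomm_ring
        _ = 1 := by rw [hWW', Matrix.mul_one, hUU]
    have hrow : ∀ k, ∑ l, V k l * star (V k l) = 1 := by
      intro k
      have := congrFun (congrFun hVV' k) k
      rw [Matrix.mul_apply] at this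
      simpa [Matrix.conjTranspose_apply, Matrix.one_apply] using this
    -- existence and uniqueness of the matching index
    have hex : ∀ k, ∃ l, V k l ≠ 0 := by
      intro k
      by_contra hc
      push_neg at hc
      have := hrow k
      simp [hc] at this
    have huniq : ∀ k l l', V k l ≠ 0 → V k l' ≠ 0 → l = l' := by
      intro k l l' h1 h2
      have e1 := hrel k l h1
      have e2 := hrel k l' h2
      exact ha (star_injective (e1 ▸ e2 ▸ rfl))
    choose σ hσ using hex
    have huniq' : ∀ k l, V k l ≠ 0 → l = σ k := fun k l h1 => huniq k l (σ k) h1 (hσ k)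
    have hd1 : ∀ k, V k (σ k) * star (V k (σ k)) = 1 := by
      intro k
      have := hrow k
      rwa [Finset.sum_eq_single (σ k)
        (fun l _ hl => by
          have : V k l = 0 := by
            by_contra hcon; exact hl (huniq' k l hcon)
          simp [this])
        (fun hmem => absurd (Finset.mem_univ _) hmem)] at this
    have harel : ∀ k, a k = star (a (σ k)) := fun k => hrel k (σ k) (hσ k)
    have hσinj : Function.Injective σ := by
      intro k k' hkk
      apply ha
      rw [harel k, harel k', hkk]
    -- first column of V
    have hVk0 : ∀ k, V k z = if k = z then 1 else 0 := by
      intro k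
      have : V k z = (U.conjTranspose * U) k z := by
        rw [hVdef, Matrix.mul_apply, Matrix.mul_apply]
        apply Finset.sum_congr rfl
        intro n _
        rw [hWdef]
        simp only [Matrix.conjTranspose_apply, Matrix.map_apply, starRingEnd_apply]
        rw [huz n]
      rw [this, hUU, Matrix.one_apply]
    have hσz : σ z = z := by
      have hz1 : V z z ≠ 0 := by rw [hVk0]; simp
      exact (huniq' z z hz1).symm
    have hσne : ∀ k, k ≠ z → σ k ≠ z := by
      intro k hk hcon
      have := hσ k
      rw [hcon, hVk0] at this
      simp [hk] at this
    -- column relation from U * V = W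
    have hUVW : U * V = W := by
      rw [hVdef, ← Matrix.mul_assoc, hUU', Matrix.one_mul]
    have hcol : ∀ k n, star (U n (σ k)) = U n k * V k (σ k) := by
      intro k n
      have := congrFun (congrFun hUVW n) (σ k)
      rw [Matrix.mul_apply] at this
      rw [Finset.sum_eq_single k
        (fun m _ hm => by
          have hV0 : V m (σ k) = 0 := by
            by_contra hcon
            exact hm (hσinj (huniq' m (σ k) hcon).symm)
          simp [hV0])
        (fun hmem => absurd (Finset.mem_univ _) hmem)] at this
      have hw : W n (σ k) = star (U n (σ k)) := rfl
      exact hw.symm.trans this.symm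
    -- build the data
    have hσbij : Function.Bijective (fun k : {k : Fin N // k ≠ z} =>
        (⟨σ k.1, hσne k.1 k.2⟩ : {k : Fin N // k ≠ z})) := by
      rw [← Finite.injective_iff_bijective]
      intro k k' hkk
      exact Subtype.ext (hσinj (congrArg Subtype.val hkk))
    refine ⟨Equiv.ofBijective _ hσbij, fun k => star (V k.1 (σ k.1)), ?_, ?_, ?_, ?_⟩
    · intro k
      have h1 := hd1 k.1
      have hns : Complex.normSq (V k.1 (σ k.1)) = 1 := by
        have h2 := Complex.mul_conj (V k.1 (σ k.1))
        have h3 : ((Complex.normSq (V k.1 (σ k.1)) : ℂ)) = 1 := by rw [← h2]; exact h1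
        exact_mod_cast h3
      have habs : ‖V k.1 (σ k.1)‖ ^ 2 = 1 := by
        rw [← Complex.normSq_eq_norm_sq, hns]
      have hst : ‖star (V k.1 (σ k.1))‖ = ‖V k.1 (σ k.1)‖ := by
        rw [Complex.star_def, Complex.norm_conj]
      rw [hst]
      nlinarith [norm_nonneg (V k.1 (σ k.1))]
    · have := harel z
      rw [hσz] at this
      exact Complex.conj_eq_iff_im.mp this.symm
    · intro k
      exact harel k.1
    · intro k n
      have h1 := hcol k.1 n
      have h2 := hd1 k.1
      show U n k.1 = star (V k.1 (σ k.1)) * star (U n (σ k.1))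
      calc U n k.1 = U n k.1 * (V k.1 (σ k.1) * star (V k.1 (σ k.1))) := by rw [h2]; ring
        _ = star (V k.1 (σ k.1)) * (U n k.1 * V k.1 (σ k.1)) := by ring
        _ = star (V k.1 (σ k.1)) * star (U n (σ k.1)) := by rw [← h1]
  · rintro ⟨p, c, hc, ha0, hap, hup⟩ i j
    rw [hH i j]
    set f : Fin N → ℂ := fun k => U i k * a k * star (U j k) with hf
    have hcc : ∀ k, star (c k) * c k = 1 := by
      intro k
      have : Complex.normSq (c k) = 1 := by
        rw [Complex.normSq_eq_norm_sq, hc k]; norm_num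
      calc star (c k) * c k = (Complex.normSq (c k) : ℂ) := by
            rw [mul_comm]; exact Complex.mul_conj (c k)
        _ = 1 := by rw [this]; norm_num
    have key : star (∑ k, f k) = ∑ k, f k := by
      rw [star_sum]
      have split1 : ∑ k, star (f k) = star (f z) + ∑ k ∈ Finset.univ.erase z, star (f k) :=
        (Finset.add_sum_erase _ _ (Finset.mem_univ z)).symm
      have split2 : ∑ k, f k = f z + ∑ k ∈ Finset.univ.erase z, f k :=
        (Finset.add_sum_erase _ _ (Finset.mem_univ z)).symm
      rw [split1, split2]
      congr 1
      · -- the z term is real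
        rw [hf]
        simp only [star_mul', star_star]
        rw [huz i, huz j]
        rw [show star (a z) = a z from Complex.conj_eq_iff_im.mpr ha0]
        try ring
      · -- the remaining terms permute
        have e1 : ∑ k ∈ Finset.univ.erase z, star (f k)
            = ∑ k : {k : Fin N // k ≠ z}, star (f k.1) := by
          apply Finset.sum_subtype
          intro x; simp [Finset.mem_erase]
        have e2 : ∑ k ∈ Finset.univ.erase z, f k
            = ∑ k : {k : Fin N // k ≠ z}, f k.1 := by
          apply Finset.sum_subtype
          intro x; simp [Finset.mem_erase]
        rw [e1, e2, ← Equiv.sum_comp p (fun k => f k.1)]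
        apply Finset.sum_congr rfl
        intro k _
        rw [hf]
        simp only [star_mul', star_star]
        rw [hup k i, hup k j, hap k]
        have := hcc k
        calc star (c k * star (U i (p k).1)) * star (star (a (p k).1)) * (c k * star (U j (p k).1))
            = (star (c k) * c k) * (U i (p k).1 * a (p k).1 * star (U j (p k).1)) := by
              simp only [star_mul', star_star]; ring
          _ = U i (p k).1 * a (p k).1 * star (U j (p k).1) := by rw [this]; ring
    exact Complex.conj_eq_iff_im.mp key
end

section
/- Let N ≥ 1 and let L ∈ ℝ^{N×N} be a real symmetric matrix whose eigenvalues are 0 = λ_1 < λ_2 ≤ … ≤ λ_N (so 0 is a simple eigenvalue) and whose eigenvector for eigenvalue 0 is (1/√N)·𝟏. Suppose there exist a unitary matrix U ∈ ℂ^{N×N} whose columns u_1, …, u_N are eigenvectors of L with u_1 = (1/√N)·𝟏, and a vector a ∈ ℂ^N with pairwise distinct components such that |a_k| = 1 for all k and U·diag(a)·U⁻¹ is a real matrix. Then at most one nonzero eigenvalue of L has odd multiplicity (i.e., all nonzero eigenvalues of L, except possibly one, have even multiplicity). -/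
lemma involutive_fixed_of_odd {α : Type*} [DecidableEq α] (σ : α → α)
    (hσ : ∀ x, σ (σ x) = x) :
    ∀ S : Finset α, (∀ k ∈ S, σ k ∈ S) → Odd S.card → ∃ k ∈ S, σ k = k := by
  intro S
  induction S using Finset.strongInduction with
  | _ S ih =>
    intro hinv hodd
    have hne : S.Nonempty := by
      rw [← Finset.card_pos]
      rcases hodd with ⟨m, hm⟩; omega
    obtain ⟨x, hx⟩ := hne
    by_cases hfix : σ x = x
    · exact ⟨x, hx, hfix⟩
    · set S' := (S.erase x).erase (σ x) with hS'
      have hσx : σ x ∈ S.erase x := Finset.mem_erase.mpr ⟨hfix, hinv x hx⟩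
      have hsub : S' ⊂ S := by
        refine Finset.ssubset_iff_of_subset ?_ |>.mpr ⟨x, hx, ?_⟩
        · exact (Finset.erase_subset _ _).trans (Finset.erase_subset _ _)
        · simp [hS', Finset.mem_erase]
      have hinv' : ∀ k ∈ S', σ k ∈ S' := by
        intro k hk
        simp only [hS', Finset.mem_erase] at hk ⊢
        obtain ⟨hk1, hk2, hk3⟩ := hk
        refine ⟨?_, ?_, hinv k hk3⟩
        · intro h; apply hk2; rw [← hσ k, h, hσ]
        · intro h; apply hk1; rw [← hσ k, h]
      have hcard : S'.card + 2 = S.card := by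
        have h1 : (S.erase x).card + 1 = S.card := Finset.card_erase_add_one hx
        have h2 : S'.card + 1 = (S.erase x).card := Finset.card_erase_add_one hσx
        omega
      have hodd' : Odd S'.card := by
        rcases hodd with ⟨m, hm⟩; exact ⟨m - 1, by omega⟩
      obtain ⟨k, hk, hfk⟩ := ih S' hsub hinv' hodd'
      exact ⟨k, (Finset.erase_subset _ _ |>.trans (Finset.erase_subset _ _)) hk, hfk⟩

/-- Let `L` be real symmetric, positive semidefinite, with `0` a simple
eigenvalue whose eigenvector is `(1/√N)·𝟏`. If there exist a unitary `U` whose columns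
are eigenvectors of `L` with first column `(1/√N)·𝟏`, and a vector `a` with pairwise
distinct unimodular components such that `U * diagonal a * U⁻¹` is a real matrix
(i.e., a normal atomic filter exists), then at most one nonzero eigenvalue of `L`
has odd multiplicity. -/
theorem normal_atomic_filter_implies_multiplicity (N : ℕ) (hN : 1 ≤ N)
    (L : Matrix (Fin N) (Fin N) ℝ) (hSym : L.IsSymm) (hPSD : L.PosSemidef)
    (hone : L.mulVec (fun _ => (1 : ℝ)) = 0)
    (h0simple :
      Module.finrank ℂ
        (Module.End.eigenspace (Matrix.toLin' (L.map Complex.ofReal)) 0) = 1)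
    (U : Matrix (Fin N) (Fin N) ℂ) (hU : U ∈ Matrix.unitaryGroup (Fin N) ℂ)
    (μ : Fin N → ℂ)
    (hcols : L.map Complex.ofReal * U = U * Matrix.diagonal μ)
    (hu1 : ∀ n, U n ⟨0, hN⟩ = (Real.sqrt N : ℂ)⁻¹)
    (a : Fin N → ℂ) (ha : Function.Injective a)
    (hmod : ∀ k, ‖a k‖ = 1)
    (hreal : ∀ i j, ((U * Matrix.diagonal a * U⁻¹) i j).im = 0) :
    {lam : ℂ | lam ≠ 0 ∧
      Odd (Module.finrank ℂ
        (Module.End.eigenspace (Matrix.toLin' (L.map Complex.ofReal)) lam))}.Subsingleton := by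
  classical
  set i0 : Fin N := ⟨0, hN⟩ with hi0
  set c := starRingEnd ℂ with hc
  set Lc := L.map Complex.ofReal with hLcdef
  have hU1 : star U * U = 1 := hU.1
  have hU2 : U * star U = 1 := hU.2
  have hUinv : U⁻¹ = star U := Matrix.inv_eq_left_inv hU1
  set Ub := U.map c with hUbdef
  set V := star U * Ub with hVdef
  -- basic conjugation facts
  have hstarmap : (star U).map c = star Ub := by
    ext i j
    simp [hUbdef, Matrix.conjTranspose_apply, Matrix.map_apply]
  have hUbU : star Ub * Ub = 1 := by
    have h := congrArg (fun M => M.map c) hU1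
    simpa [Matrix.map_mul, hstarmap] using h
  have hUbU2 : Ub * star Ub = 1 := by
    have h := congrArg (fun M => M.map c) hU2
    simpa [Matrix.map_mul, hstarmap] using h
  -- Lc facts
  have hLcmap : Lc.map c = Lc := by
    ext i j
    simp [hc, hLcdef, Matrix.map_apply, Complex.conj_ofReal]
  have hLcstar : star Lc = Lc := by
    ext i j
    have hs : L j i = L i j := (congrFun (congrFun hSym i) j : L.transpose i j = L i j)
    simp [hc, hLcdef, Matrix.conjTranspose_apply, Matrix.map_apply, Complex.conj_ofReal, hs]
  have hLc : Lc = U * Matrix.diagonal μ * star U := by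
    calc Lc = Lc * (U * star U) := by rw [hU2, Matrix.mul_one]
    _ = Lc * U * star U := by rw [Matrix.mul_assoc]
    _ = U * Matrix.diagonal μ * star U := by rw [hcols]
  have hD : Matrix.diagonal μ = star U * Lc * U := by
    rw [Matrix.mul_assoc, hcols, ← Matrix.mul_assoc, hU1, Matrix.one_mul]
  -- μ is real
  have hμreal : ∀ k, c (μ k) = μ k := by
    have h1 : star (Matrix.diagonal μ) = Matrix.diagonal μ := by
      conv_lhs => rw [hD]
      rw [star_mul, star_mul, star_star, hLcstar, ← Matrix.mul_assoc, ← hD]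
    intro k
    have h2 := congrFun (congrFun h1 k) k
    simpa [hc, Matrix.star_apply, Matrix.diagonal_apply_eq] using h2
  -- H is real
  have hHreal : (U * Matrix.diagonal a * star U).map c = U * Matrix.diagonal a * star U := by
    ext i j
    rw [Matrix.map_apply]
    apply Complex.conj_eq_iff_im.mpr
    have := hreal i j
    rwa [hUinv] at this
  -- commutation for a
  have h2 : U * Matrix.diagonal a * star U
      = Ub * Matrix.diagonal (fun k => c (a k)) * star Ub := by
    conv_lhs => rw [← hHreal]
    rw [Matrix.map_mul, Matrix.map_mul, Matrix.diagonal_map (map_zero c), hstarmap]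
  have hVa : Matrix.diagonal a * V = V * Matrix.diagonal (fun k => c (a k)) := by
    have h3 := congrArg (fun M => star U * M * Ub) h2
    simp only [← Matrix.mul_assoc] at h3
    rw [hU1, Matrix.one_mul] at h3
    rw [hVdef]
    calc Matrix.diagonal a * (star U * Ub) = Matrix.diagonal a * star U * Ub := by
          rw [Matrix.mul_assoc]
    _ = star U * Ub * Matrix.diagonal (fun k => c (a k)) * star Ub * Ub := h3
    _ = star U * Ub * Matrix.diagonal (fun k => c (a k)) * (star Ub * Ub) := by
          rw [Matrix.mul_assoc]
    _ = star U * Ub * Matrix.diagonal (fun k => c (a k)) := by rw [hUbU, Matrix.mul_one]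
  -- commutation for μ
  have h4 : U * Matrix.diagonal μ * star U
      = Ub * Matrix.diagonal (fun k => c (μ k)) * star Ub := by
    conv_lhs => rw [← hLc, ← hLcmap, hLc]
    rw [Matrix.map_mul, Matrix.map_mul, Matrix.diagonal_map (map_zero c), hstarmap]
  have hVμ : Matrix.diagonal μ * V = V * Matrix.diagonal (fun k => c (μ k)) := by
    have h3 := congrArg (fun M => star U * M * Ub) h4
    simp only [← Matrix.mul_assoc] at h3
    rw [hU1, Matrix.one_mul] at h3
    rw [hVdef]
    calc Matrix.diagonal μ * (star U * Ub) = Matrix.diagonal μ * star U * Ub := by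
          rw [Matrix.mul_assoc]
    _ = star U * Ub * Matrix.diagonal (fun k => c (μ k)) * star Ub * Ub := h3
    _ = star U * Ub * Matrix.diagonal (fun k => c (μ k)) * (star Ub * Ub) := by
          rw [Matrix.mul_assoc]
    _ = star U * Ub * Matrix.diagonal (fun k => c (μ k)) := by rw [hUbU, Matrix.mul_one]
  -- entrywise
  have key_a : ∀ j k, V j k ≠ 0 → a j = c (a k) := by
    intro j k h
    have h5 := congrFun (congrFun hVa j) k
    rw [Matrix.diagonal_mul, Matrix.mul_diagonal] at h5
    exact mul_right_cancel₀ h (h5.trans (mul_comm _ _))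
  have key_μ : ∀ j k, V j k ≠ 0 → μ j = μ k := by
    intro j k h
    have h5 := congrFun (congrFun hVμ j) k
    rw [Matrix.diagonal_mul, Matrix.mul_diagonal] at h5
    have h6 := mul_right_cancel₀ h (h5.trans (mul_comm _ _))
    rw [h6, hμreal]
  -- each column of V nonzero
  have hVunit : star V * V = 1 := by
    rw [hVdef, star_mul, star_star]
    calc star Ub * U * (star U * Ub) = star Ub * (U * star U) * Ub := by
          rw [Matrix.mul_assoc, Matrix.mul_assoc, Matrix.mul_assoc]
    _ = star Ub * Ub := by rw [hU2, Matrix.mul_one]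
    _ = 1 := hUbU
  have hVcol : ∀ k, ∃ j, V j k ≠ 0 := by
    intro k
    by_contra h
    push_neg at h
    have h6 := congrFun (congrFun hVunit k) k
    rw [Matrix.mul_apply] at h6
    simp only [h, Matrix.conjTranspose_apply] at h6
    simp at h6
  -- the involution
  set σ : Fin N → Fin N := fun k => (hVcol k).choose with hσdef
  have hσV : ∀ k, V (σ k) k ≠ 0 := fun k => (hVcol k).choose_spec
  have hσa : ∀ k, a (σ k) = c (a k) := fun k => key_a _ _ (hσV k)
  have hσμ : ∀ k, μ (σ k) = μ k := fun k => key_μ _ _ (hσV k)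
  have hσσ : ∀ k, σ (σ k) = k := by
    intro k
    apply ha
    rw [hσa, hσa]
    simp [hc, Complex.conj_conj]
  -- σ fixes i0
  have hVi0 : ∀ j, V j i0 = (1 : Matrix (Fin N) (Fin N) ℂ) j i0 := by
    intro j
    have hUb0 : ∀ n, Ub n i0 = U n i0 := by
      intro n
      simp [hc, hUbdef, Matrix.map_apply, hu1, map_inv₀, Complex.conj_ofReal]
    calc V j i0 = ∑ n, (star U) j n * Ub n i0 := Matrix.mul_apply
    _ = ∑ n, (star U) j n * U n i0 := by simp_rw [hUb0]
    _ = (star U * U) j i0 := (Matrix.mul_apply).symm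
    _ = (1 : Matrix (Fin N) (Fin N) ℂ) j i0 := by rw [hU1]
  have hσ0 : σ i0 = i0 := by
    by_contra h
    have h7 := hσV i0
    rw [hVi0 (σ i0), Matrix.one_apply_ne h] at h7
    exact h7 rfl
  -- μ i0 = 0
  have hμ0 : μ i0 = 0 := by
    have hsumr : ∑ n, L i0 n = 0 := by
      have := congrFun hone i0
      simpa [Matrix.mulVec, dotProduct] using this
    have hsum : ∑ n, (L i0 n : ℂ) = 0 := by
      push_cast [← hsumr]
      norm_cast
    have h1 := congrFun (congrFun hcols i0) i0
    rw [Matrix.mul_apply, Matrix.mul_diagonal, hu1] at h1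
    have hlhs : ∑ n, Lc i0 n * U n i0 = 0 := by
      simp_rw [hu1]
      rw [← Finset.sum_mul]
      have : ∑ n, Lc i0 n = 0 := by
        simp only [hLcdef, Matrix.map_apply]
        exact hsum
      rw [this, zero_mul]
    rw [hLcdef] at hlhs
    rw [hlhs] at h1
    have hs : ((Real.sqrt N : ℂ))⁻¹ ≠ 0 := by
      simp only [ne_eq, inv_eq_zero, Complex.ofReal_eq_zero]
      have hN' : (0:ℝ) < N := by exact_mod_cast Nat.lt_of_lt_of_le Nat.zero_lt_one hN
      exact Real.sqrt_ne_zero'.mpr hN'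
    exact (mul_eq_zero.mp h1.symm).resolve_left hs
  -- multiplicity formula
  have hdetU : IsUnit U.det := Matrix.isUnit_det_of_left_inverse hU1
  have hdetsU : IsUnit (star U).det := Matrix.isUnit_det_of_right_inverse hU1
  have hmult : ∀ lam : ℂ,
      Module.finrank ℂ (Module.End.eigenspace (Matrix.toLin' Lc) lam)
        = (Finset.univ.filter (fun k => μ k = lam)).card := by
    intro lam
    have hker : Module.End.eigenspace (Matrix.toLin' Lc) lam
        = LinearMap.ker (Matrix.toLin' (Lc - lam • 1)) := by
      rw [Module.End.eigenspace_def, map_sub, map_smul, Matrix.toLin'_one]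
      rfl
    have htl : Matrix.toLin' (Lc - lam • 1) = (Lc - lam • 1).mulVecLin := by
      apply LinearMap.ext; intro v
      rw [Matrix.toLin'_apply, Matrix.mulVecLin_apply]
    have hrn := LinearMap.finrank_range_add_finrank_ker (Matrix.toLin' (Lc - lam • 1))
    have hdiag : Matrix.diagonal (fun k => μ k - lam) = Matrix.diagonal μ - lam • 1 := by
      ext i j
      by_cases h : i = j
      · subst h; simp [Matrix.diagonal_apply_eq, Matrix.one_apply_eq]
      · simp [Matrix.diagonal_apply_ne _ h, Matrix.one_apply_ne h]
    have hdecomp : Lc - lam • 1 = U * Matrix.diagonal (fun k => μ k - lam) * star U := by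
      rw [hdiag, mul_sub, sub_mul, ← hLc, Matrix.mul_smul, Matrix.mul_one, Matrix.smul_mul,
        hU2]
    have hrank2 : (Lc - lam • 1).rank = (Matrix.diagonal (fun k => μ k - lam)).rank := by
      rw [hdecomp, Matrix.rank_mul_eq_left_of_isUnit_det (star U) _ hdetsU,
        Matrix.rank_mul_eq_right_of_isUnit_det U _ hdetU]
    have hrank3 : (Matrix.diagonal (fun k => μ k - lam)).rank
        = (Finset.univ.filter (fun k => ¬ (μ k = lam))).card := by
      rw [Matrix.rank_diagonal]
      rw [Fintype.card_subtype]
      congr 1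
      apply Finset.filter_congr
      intro x _
      simp [sub_ne_zero]
    have hsplit := Finset.card_filter_add_card_filter_not
      (s := (Finset.univ : Finset (Fin N))) (p := fun k => μ k = lam)
    have hcardu : (Finset.univ : Finset (Fin N)).card = N := by simp
    have hrange : Module.finrank ℂ (LinearMap.range (Matrix.toLin' (Lc - lam • 1)))
        = (Lc - lam • 1).rank := by
      rw [htl]; rfl
    have hfr : Module.finrank ℂ (Fin N → ℂ) = N := by simp
    rw [hker]
    omega
  -- final counting
  intro lam1 hl1 lam2 hl2
  obtain ⟨hne1, hodd1⟩ := hl1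
  obtain ⟨hne2, hodd2⟩ := hl2
  rw [hmult] at hodd1 hodd2
  by_contra hne
  have hinv1 : ∀ k ∈ Finset.univ.filter (fun k => μ k = lam1),
      σ k ∈ Finset.univ.filter (fun k => μ k = lam1) := by
    intro k hk
    simp only [Finset.mem_filter, Finset.mem_univ, true_and] at hk ⊢
    rw [hσμ]; exact hk
  have hinv2 : ∀ k ∈ Finset.univ.filter (fun k => μ k = lam2),
      σ k ∈ Finset.univ.filter (fun k => μ k = lam2) := by
    intro k hk
    simp only [Finset.mem_filter, Finset.mem_univ, true_and] at hk ⊢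
    rw [hσμ]; exact hk
  obtain ⟨k1, hk1mem, hk1fix⟩ := involutive_fixed_of_odd σ hσσ _ hinv1 hodd1
  obtain ⟨k2, hk2mem, hk2fix⟩ := involutive_fixed_of_odd σ hσσ _ hinv2 hodd2
  simp only [Finset.mem_filter, Finset.mem_univ, true_and] at hk1mem hk2mem
  -- fixed points have a k = ±1
  have hval : ∀ k, σ k = k → a k = 1 ∨ a k = -1 := by
    intro k hk
    have h1 : c (a k) = a k := by rw [← hσa k, hk]
    have him : (a k).im = 0 := Complex.conj_eq_iff_im.mp h1
    have hform : a k = ((a k).re : ℂ) := by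
      apply Complex.ext <;> simp [him]
    have habs : |(a k).re| = 1 := by
      have := hmod k
      rw [hform, Complex.norm_real, Real.norm_eq_abs] at this
      exact this
    rcases abs_eq (by norm_num : (0:ℝ) ≤ 1) |>.mp habs with h | h
    · left; rw [hform, h]; norm_num
    · right; rw [hform, h]; norm_num
  -- three distinct fixed points
  have hk1i0 : k1 ≠ i0 := by
    intro h; rw [h, hμ0] at hk1mem; exact hne1 hk1mem.symm
  have hk2i0 : k2 ≠ i0 := by
    intro h; rw [h, hμ0] at hk2mem; exact hne2 hk2mem.symm
  have hk12 : k1 ≠ k2 := by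
    intro h; apply hne; rw [← hk1mem, h, hk2mem]
  have d01 : a i0 ≠ a k1 := fun h => hk1i0 (ha h).symm
  have d02 : a i0 ≠ a k2 := fun h => hk2i0 (ha h).symm
  have d12 : a k1 ≠ a k2 := fun h => hk12 (ha h)
  rcases hval i0 hσ0 with h0 | h0 <;>
    rcases hval k1 hk1fix with h1 | h1 <;>
    rcases hval k2 hk2fix with h2 | h2 <;>
    first
    | exact d01 (h0.trans h1.symm)
    | exact d02 (h0.trans h2.symm)
    | exact d12 (h1.trans h2.symm)
end

section
/- Let N ≥ 1 and let L ∈ ℝ^{N×N} be a real symmetric matrix whose eigenvalues are 0 = λ_1 < λ_2 ≤ … ≤ λ_N (so 0 is a simple eigenvalue) and whose eigenvector for eigenvalue 0 is (1/√N)·𝟏. If at most one nonzero eigenvalue of L has odd multiplicity, then there exists a unitary matrix U ∈ ℂ^{N×N} whose columns u_1, …, u_N form an orthonormal family of eigenvectors of L satisfying u_1 = (1/√N)·𝟏 and u_k = conj(u_{N+2−k}) for k = 2, …, ⌊N/2⌋+1 (where conj denotes entrywise complex conjugation and ⌊N/2⌋ is the largest integer not exceeding N/2). -/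
open Matrix


lemma aux_finrank_eigenspace_eq_card {K : Type*} [Field K] [DecidableEq K] {V : Type*} [AddCommGroup V]
    [Module K V] {n : ℕ} (b : Module.Basis (Fin n) K V) (T : Module.End K V) (μ : Fin n → K)
    (h : ∀ i, T (b i) = μ i • b i) (lam : K) :
    Module.finrank K (T.eigenspace lam) = Fintype.card {i // μ i = lam} := by
  classical
  have hspan : T.eigenspace lam
      = Submodule.span K (Set.range (fun i : {i // μ i = lam} => b i.1)) := by
    apply le_antisymm
    · intro x hx
      rw [Module.End.mem_eigenspace_iff] at hx
      have hx1 : x = ∑ i, b.repr x i • b i := (b.sum_repr x).symm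
      have h2 : ∑ i, ((μ i - lam) * b.repr x i) • b i = 0 := by
        have : T x - lam • x = 0 := by rw [hx]; simp
        calc ∑ i, ((μ i - lam) * b.repr x i) • b i
            = T (∑ i, b.repr x i • b i) - lam • ∑ i, b.repr x i • b i := by
              rw [map_sum, Finset.smul_sum, ← Finset.sum_sub_distrib]
              apply Finset.sum_congr rfl
              intro i _
              rw [LinearMap.map_smul, h i, smul_smul, smul_smul, ← sub_smul]
              ring_nf
          _ = 0 := by rw [← hx1]; exact this
      have h3 : ∀ i, (μ i - lam) * b.repr x i = 0 :=
        Fintype.linearIndependent_iff.mp b.linearIndependent _ h2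
      have h4 : ∀ i, μ i ≠ lam → b.repr x i = 0 := by
        intro i hi
        have := h3 i
        rcases mul_eq_zero.mp this with h | h
        · exact absurd (sub_eq_zero.mp h) hi
        · exact h
      rw [hx1]
      apply Submodule.sum_mem
      intro i _
      by_cases hmu : μ i = lam
      · exact Submodule.smul_mem _ _ (Submodule.subset_span ⟨⟨i, hmu⟩, rfl⟩)
      · rw [h4 i hmu, zero_smul]; exact Submodule.zero_mem _
    · rw [Submodule.span_le]
      rintro _ ⟨⟨i, hi⟩, rfl⟩
      rw [SetLike.mem_coe, Module.End.mem_eigenspace_iff, h i, hi]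
  rw [hspan]
  exact finrank_span_eq_card (b.linearIndependent.comp Subtype.val Subtype.val_injective)


lemma aux_linearIndependent_cols {n : ℕ} {R : Type*} [Field R]
    (A B : Matrix (Fin n) (Fin n) R) (h : A * B = 1) :
    LinearIndependent R (fun i => (fun j => B j i) : Fin n → (Fin n → R)) := by
  rw [Fintype.linearIndependent_iff]
  intro c hc i
  have hmv : B.mulVec c = 0 := by
    funext j
    have := congrFun hc j
    simpa [mulVec, dotProduct, Finset.sum_apply, mul_comm] using this
  have : A.mulVec (B.mulVec c) = c := by
    rw [mulVec_mulVec, h, one_mulVec]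
  rw [hmv, mulVec_zero] at this
  exact (congrFun this.symm i)

lemma aux_col_eigen {n : ℕ} {R : Type*} [CommRing R] (M B : Matrix (Fin n) (Fin n) R)
    (ν : Fin n → R) (h : M * B = B * diagonal ν) (i : Fin n) :
    Matrix.toLin' M (fun j => B j i) = ν i • (fun j => B j i) := by
  funext j
  have := congrFun (congrFun h j) i
  simp only [Matrix.mul_apply, diagonal] at this
  simp only [toLin'_apply, mulVec, dotProduct]
  rw [this]
  simp [Finset.sum_ite_eq, mul_comm]


lemma aux_finrank_eigenspace_of_diagonalization {n : ℕ} (hn : 1 ≤ n) {R : Type*} [Field R]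
    [DecidableEq R] (M A B : Matrix (Fin n) (Fin n) R) (hAB : A * B = 1)
    (ν : Fin n → R) (h : M * B = B * diagonal ν) (lam : R) :
    Module.finrank R (Module.End.eigenspace (Matrix.toLin' M) lam) = Fintype.card {i // ν i = lam} := by
  have : Nonempty (Fin n) := ⟨⟨0, hn⟩⟩
  have hcard : Fintype.card (Fin n) = Module.finrank R (Fin n → R) := by simp
  let b := basisOfLinearIndependentOfCardEqFinrank (aux_linearIndependent_cols A B hAB) hcard
  have hb : ⇑b = (fun i => (fun j => B j i)) := coe_basisOfLinearIndependentOfCardEqFinrank _ _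
  refine aux_finrank_eigenspace_eq_card b _ ν (fun i => ?_) lam
  rw [hb]
  exact aux_col_eigen M B ν h i


lemma aux_exists_palindrome {α : Type*} [DecidableEq α] (f : α → ℝ) :
    ∀ (n : ℕ) (l : List α), l.length = n →
      {x : ℝ | Odd ((l.map f).count x)}.Subsingleton →
      ∃ l' : List α, l'.Perm l ∧
        ∀ (i j : ℕ) (hi : i < l'.length) (hj : j < l'.length),
          i + j = l'.length - 1 → f (l'.get ⟨i, hi⟩) = f (l'.get ⟨j, hj⟩) := by
  intro n
  induction n using Nat.strong_induction_on with
  | _ n IH =>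
    intro l hlen hsub
    by_cases hn2 : n ≤ 1
    · refine ⟨l, List.Perm.refl l, ?_⟩
      intro i j hi hj hsum
      have : i = j := by omega
      subst this; rfl
    · push_neg at hn2
      -- find a pair a, b with equal f values
      have hpair : ∃ a ∈ l, ∃ b ∈ l.erase a, f a = f b := by
        by_contra hno
        push_neg at hno
        have hcount : ∀ a ∈ l, (l.map f).count (f a) = 1 := by
          intro a ha
          have hperm : l.Perm (a :: l.erase a) := List.perm_cons_erase ha
          have hc : (l.map f).count (f a) = (((a :: l.erase a)).map f).count (f a) :=
            (hperm.map f).count_eq _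
          have h0 : ((l.erase a).map f).count (f a) = 0 := by
            rw [List.count_eq_zero]
            intro hmem
            obtain ⟨b, hb, hfb⟩ := List.mem_map.mp hmem
            exact hno a ha b hb hfb.symm
          rw [hc, List.map_cons, List.count_cons_self, h0]
        obtain ⟨x, y, t, rfl⟩ : ∃ x y t, l = x :: y :: t := by
          rcases l with _ | ⟨x, _ | ⟨y, t⟩⟩
          · simp at hlen; omega
          · simp at hlen; omega
          · exact ⟨x, y, t, rfl⟩
        have hxmem : x ∈ x :: y :: t := List.mem_cons_self
        have hymem : y ∈ x :: y :: t := List.mem_cons_of_mem _ (List.mem_cons_self)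
        have hxy : f x ≠ f y := by
          intro hexact
          exact hno x hxmem y (by rw [List.erase_cons_head]; exact List.mem_cons_self) hexact
        have hx1 : Odd (((x :: y :: t).map f).count (f x)) := by
          rw [hcount x hxmem]; exact odd_one
        have hy1 : Odd (((x :: y :: t).map f).count (f y)) := by
          rw [hcount y hymem]; exact odd_one
        exact hxy (hsub hx1 hy1)
      obtain ⟨a, ha, b, hb, hfab⟩ := hpair
      set l2 := (l.erase a).erase b with hl2
      have hperm2 : l.Perm (a :: b :: l2) :=
        (List.perm_cons_erase ha).trans ((List.perm_cons_erase hb).cons a)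
      have hlen2 : l2.length = n - 2 := by
        have := hperm2.length_eq
        simp only [List.length_cons] at this
        omega
      have hsub2 : {x : ℝ | Odd ((l2.map f).count x)}.Subsingleton := by
        have key : ∀ x : ℝ, Odd ((l2.map f).count x) ↔ Odd ((l.map f).count x) := by
          intro x
          have hc : (l.map f).count x = ((a :: b :: l2).map f).count x :=
            (hperm2.map f).count_eq _
          rw [hc]
          simp only [List.map_cons, List.count_cons]
          rw [Nat.odd_iff, Nat.odd_iff]
          by_cases hax : f a = x
          · have hbx : f b = x := hfab ▸ hax
            simp [hax, hbx]
            omega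
          · have hbx : f b ≠ x := fun h => hax (hfab ▸ h)
            simp [hax, hbx]
        intro x hx y hy
        exact hsub ((key x).mp hx) ((key y).mp hy)
      obtain ⟨l3, hl3perm, hl3pal⟩ := IH (n - 2) (by omega) l2 hlen2 hsub2
      have hm : l3.length = n - 2 := hl3perm.length_eq.trans hlen2
      refine ⟨a :: (l3 ++ [b]), ?_, ?_⟩
      · exact (((List.perm_append_singleton b l3).cons a).trans
          (((hl3perm.cons b).cons a).trans hperm2.symm))
      · intro i j hi hj hsum
        have hL : (a :: (l3 ++ [b])).length = l3.length + 2 := by simp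
        have hi2 : i < l3.length + 2 := hL ▸ hi
        have hj2 : j < l3.length + 2 := hL ▸ hj
        have hsum2 : i + j = l3.length + 1 := by rw [hL] at hsum; omega
        rcases Nat.eq_zero_or_pos i with hi0 | hipos
        · subst hi0
          have hj' : j = l3.length + 1 := by omega
          subst hj'
          have hget0 : (a :: (l3 ++ [b])).get ⟨0, hi⟩ = a := rfl
          have hgetlast : (a :: (l3 ++ [b])).get ⟨l3.length + 1, hj⟩ = b := by
            simp only [List.get_eq_getElem, List.getElem_cons_succ]
            exact List.getElem_concat_length rfl (by simp)
          rw [hget0, hgetlast]; exact hfab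
        rcases Nat.eq_zero_or_pos j with hj0 | hjpos
        · subst hj0
          have hi' : i = l3.length + 1 := by omega
          subst hi'
          have hgetlast : (a :: (l3 ++ [b])).get ⟨l3.length + 1, hi⟩ = b := by
            simp only [List.get_eq_getElem, List.getElem_cons_succ]
            exact List.getElem_concat_length rfl (by simp)
          rw [hgetlast]; exact hfab.symm
        obtain ⟨i', rfl⟩ : ∃ i', i = i' + 1 := ⟨i - 1, by omega⟩
        obtain ⟨j', rfl⟩ : ∃ j', j = j' + 1 := ⟨j - 1, by omega⟩
        have hi'm : i' < l3.length := by omega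
        have hj'm : j' < l3.length := by omega
        have hgi : (a :: (l3 ++ [b])).get ⟨i' + 1, hi⟩ = l3.get ⟨i', hi'm⟩ := by
          simp only [List.get_eq_getElem, List.getElem_cons_succ]
          exact List.getElem_append_left hi'm
        have hgj : (a :: (l3 ++ [b])).get ⟨j' + 1, hj⟩ = l3.get ⟨j', hj'm⟩ := by
          simp only [List.get_eq_getElem, List.getElem_cons_succ]
          exact List.getElem_append_left hj'm
        rw [hgi, hgj]
        exact hl3pal i' j' hi'm hj'm (by omega)

lemma aux_count_map_finRange (N : ℕ) (μ : Fin N → ℝ) (x : ℝ) :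
    ((List.finRange N).map μ).count x = Fintype.card {i // μ i = x} := by
  classical
  rw [Fintype.card_subtype, Fin.univ_def]
  rw [List.count_eq_countP, List.countP_map, List.countP_eq_length_filter]
  rw [Finset.card]
  simp only [Finset.filter_val]
  rw [Multiset.filter_coe, Multiset.coe_card]
  congr 1


def ptIdx (N : ℕ) (hN : 0 < N) (k : Fin N) : Fin N := ⟨(N - (k : ℕ)) % N, Nat.mod_lt _ hN⟩

section Bsec
variable {N : ℕ} (hN : 0 < N)

lemma ptIdx_val (k : Fin N) (hk : 1 ≤ (k : ℕ)) : (ptIdx N hN k : ℕ) = N - (k : ℕ) := by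
  have : N - (k : ℕ) < N := by omega
  simp [ptIdx, Nat.mod_eq_of_lt this]

lemma ptIdx_zero (k : Fin N) (hk : (k : ℕ) = 0) : ptIdx N hN k = k := by
  apply Fin.ext
  simp [ptIdx, hk]

lemma ptIdx_invol (k : Fin N) : ptIdx N hN (ptIdx N hN k) = k := by
  rcases Nat.eq_zero_or_pos (k : ℕ) with h | h
  · rw [ptIdx_zero hN k h, ptIdx_zero hN k h]
  · have h1 := ptIdx_val hN k h
    have h2 : 1 ≤ (ptIdx N hN k : ℕ) := by omega
    apply Fin.ext
    rw [ptIdx_val hN _ h2, h1]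
    omega

lemma ptIdx_inj {j k : Fin N} (h : ptIdx N hN j = ptIdx N hN k) : j = k := by
  have := congrArg (ptIdx N hN) h
  rwa [ptIdx_invol, ptIdx_invol] at this

noncomputable def cB (N : ℕ) (hN : 0 < N) (k : Fin N) : ℂ :=
  if k = ptIdx N hN k then 1
  else if (k : ℕ) < N - (k : ℕ) then ((Real.sqrt 2)⁻¹ : ℝ)
  else -Complex.I * ((Real.sqrt 2)⁻¹ : ℝ)

noncomputable def dB (N : ℕ) (hN : 0 < N) (k : Fin N) : ℂ :=
  if k = ptIdx N hN k then 0
  else if (k : ℕ) < N - (k : ℕ) then Complex.I * ((Real.sqrt 2)⁻¹ : ℝ)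
  else ((Real.sqrt 2)⁻¹ : ℝ)

noncomputable def Bmat (N : ℕ) (hN : 0 < N) : Matrix (Fin N) (Fin N) ℂ :=
  fun a k => (if a = k then cB N hN k else 0) + (if a = ptIdx N hN k then dB N hN k else 0)

lemma rr_half : (((Real.sqrt 2)⁻¹ : ℝ) : ℂ) * (((Real.sqrt 2)⁻¹ : ℝ) : ℂ) = 1 / 2 := by
  rw [← Complex.ofReal_mul, ← mul_inv, Real.mul_self_sqrt (by norm_num)]
  norm_num

lemma star_r : star ((((Real.sqrt 2)⁻¹ : ℝ)) : ℂ) = (((Real.sqrt 2)⁻¹ : ℝ) : ℂ) :=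
  Complex.conj_ofReal _

-- branch facts
lemma branch_of_ne (k : Fin N) (hk : k ≠ ptIdx N hN k) :
    1 ≤ (k : ℕ) ∧ (ptIdx N hN k : ℕ) = N - (k : ℕ) ∧ (k : ℕ) ≠ N - (k : ℕ) ∧
      ((ptIdx N hN k : ℕ) < N - (ptIdx N hN k : ℕ) ↔ N - (k : ℕ) < (k : ℕ)) := by
  have h1 : 1 ≤ (k : ℕ) := by
    by_contra h
    exact hk (ptIdx_zero hN k (by omega)).symm
  have h2 := ptIdx_val hN k h1
  have h3 : (k : ℕ) ≠ N - (k : ℕ) := by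
    intro h
    exact hk (Fin.ext (by rw [h2, ← h]))
  refine ⟨h1, h2, h3, ?_⟩
  have hkN : (k : ℕ) < N := k.2
  rw [h2]
  omega

lemma cB_dB_norm (k : Fin N) :
    star (cB N hN k) * cB N hN k + star (dB N hN k) * dB N hN k = 1 := by
  by_cases h : k = ptIdx N hN k
  · simp only [cB, dB, if_pos h]
    simp
  · obtain ⟨h1, h2, h3, h4⟩ := branch_of_ne hN k h
    by_cases h5 : (k : ℕ) < N - (k : ℕ)
    · simp only [cB, dB, if_neg h, if_pos h5]
      simp only [star_mul', star_r, Complex.star_def, Complex.conj_I]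
      linear_combination 2 * rr_half - ((((Real.sqrt 2)⁻¹ : ℝ) : ℂ) * (((Real.sqrt 2)⁻¹ : ℝ) : ℂ)) * Complex.I_mul_I
    · simp only [cB, dB, if_neg h, if_neg h5]
      simp only [star_mul', Complex.star_def, map_neg, Complex.conj_I, Complex.conj_ofReal]
      linear_combination 2 * rr_half - ((((Real.sqrt 2)⁻¹ : ℝ) : ℂ) * (((Real.sqrt 2)⁻¹ : ℝ) : ℂ)) * Complex.I_mul_I

lemma ptIdx_ne (k : Fin N) (hk : k ≠ ptIdx N hN k) : ptIdx N hN k ≠ ptIdx N hN (ptIdx N hN k) := by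
  rw [ptIdx_invol]
  exact fun h => hk h.symm

lemma cB_dB_cross (k : Fin N) (hk : k ≠ ptIdx N hN k) :
    star (cB N hN (ptIdx N hN k)) * dB N hN k + star (dB N hN (ptIdx N hN k)) * cB N hN k = 0 := by
  obtain ⟨h1, h2, h3, h4⟩ := branch_of_ne hN k hk
  have hptne := ptIdx_ne hN k hk
  by_cases h5 : (k : ℕ) < N - (k : ℕ)
  · have h6 : ¬ ((ptIdx N hN k : ℕ) < N - (ptIdx N hN k : ℕ)) := by rw [h4]; omega
    simp only [cB, dB, if_neg hk, if_neg hptne, if_pos h5, if_neg h6]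
    simp only [star_mul', Complex.star_def, map_neg, Complex.conj_I, Complex.conj_ofReal]
    linear_combination ((((Real.sqrt 2)⁻¹ : ℝ) : ℂ) * (((Real.sqrt 2)⁻¹ : ℝ) : ℂ)) * Complex.I_mul_I
  · have h6 : ((ptIdx N hN k : ℕ) < N - (ptIdx N hN k : ℕ)) := by rw [h4]; omega
    simp only [cB, dB, if_neg hk, if_neg hptne, if_neg h5, if_pos h6]
    simp only [star_mul', Complex.star_def, map_neg, Complex.conj_I, Complex.conj_ofReal]
    linear_combination ((((Real.sqrt 2)⁻¹ : ℝ) : ℂ) * (((Real.sqrt 2)⁻¹ : ℝ) : ℂ)) * Complex.I_mul_I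

lemma cB_dB_conj (k : Fin N) (hk : k ≠ ptIdx N hN k) (hlt : (k : ℕ) < N - (k : ℕ)) :
    cB N hN k = star (dB N hN (ptIdx N hN k)) ∧ dB N hN k = star (cB N hN (ptIdx N hN k)) := by
  obtain ⟨h1, h2, h3, h4⟩ := branch_of_ne hN k hk
  have hptne := ptIdx_ne hN k hk
  have h6 : ¬ ((ptIdx N hN k : ℕ) < N - (ptIdx N hN k : ℕ)) := by rw [h4]; omega
  constructor
  · simp [cB, dB, if_neg hk, if_neg hptne, if_pos hlt, if_neg h6, star_r]
  · simp only [cB, dB, if_neg hk, if_neg hptne, if_pos hlt, if_neg h6]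
    simp [Complex.star_def, Complex.conj_I, Complex.conj_ofReal]

lemma aux_sum_ite_mul {n : ℕ} (p q : Fin n) (x y : ℂ) :
    ∑ a : Fin n, (if a = p then x else 0) * (if a = q then y else 0)
      = if p = q then x * y else 0 := by
  rw [Finset.sum_eq_single p]
  · by_cases h : p = q <;> simp [h]
  · intro b _ hb
    simp [hb]
  · intro h
    simp at h

lemma aux_inner_pair {n : ℕ} (p q p' q' : Fin n) (c d c' d' : ℂ) :
    ∑ a : Fin n, star ((if a = p then c else 0) + (if a = q then d else 0)) *
        ((if a = p' then c' else 0) + (if a = q' then d' else 0))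
      = (if p = p' then star c * c' else 0) + (if p = q' then star c * d' else 0)
        + (if q = p' then star d * c' else 0) + (if q = q' then star d * d' else 0) := by
  have : ∀ a : Fin n, star ((if a = p then c else 0) + (if a = q then d else 0)) *
        ((if a = p' then c' else 0) + (if a = q' then d' else 0))
      = (if a = p then star c else 0) * (if a = p' then c' else 0)
        + (if a = p then star c else 0) * (if a = q' then d' else 0)
        + (if a = q then star d else 0) * (if a = p' then c' else 0)
        + (if a = q then star d else 0) * (if a = q' then d' else 0) := by
    intro a
    rw [star_add, apply_ite (star : ℂ → ℂ), apply_ite (star : ℂ → ℂ), star_zero]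
    ring
  simp only [this, Finset.sum_add_distrib, aux_sum_ite_mul]

lemma Bmat_col_orth (j k : Fin N) :
    ∑ a : Fin N, star (Bmat N hN a j) * Bmat N hN a k = if j = k then 1 else 0 := by
  unfold Bmat
  rw [aux_inner_pair]
  by_cases hjk : j = k
  · subst hjk
    rw [if_pos rfl, if_pos rfl]
    by_cases h : j = ptIdx N hN j
    · have hc : cB N hN j = 1 := by simp only [cB, if_pos h]
      have hd : dB N hN j = 0 := by simp only [dB, if_pos h]
      simp [hc, hd]
    · rw [if_neg h, if_neg (fun hh => h hh.symm)]
      simpa using cB_dB_norm hN j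
  · rw [if_neg hjk, if_neg hjk]
    have h4 : ptIdx N hN j ≠ ptIdx N hN k := fun hh => hjk (ptIdx_inj hN hh)
    rw [if_neg h4]
    by_cases hj : j = ptIdx N hN k
    · have hkpt : k ≠ ptIdx N hN k := fun hh => hjk (hj.symm ▸ hh).symm
      have h3 : ptIdx N hN j = k := by rw [hj, ptIdx_invol]
      rw [if_pos hj, if_pos h3, hj]
      have := cB_dB_cross hN k hkpt
      linear_combination this
    · have h3 : ptIdx N hN j ≠ k := fun hh => hj (by rw [← hh, ptIdx_invol])
      rw [if_neg hj, if_neg h3]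
      ring

lemma Bmat_conj (k : Fin N) (hk1 : 1 ≤ (k : ℕ)) (hk2 : (k : ℕ) ≤ N / 2) (a : Fin N) :
    Bmat N hN a k = star (Bmat N hN a (ptIdx N hN k)) := by
  have hkN : (k : ℕ) < N := k.2
  by_cases heq : 2 * (k : ℕ) = N
  · have hpt : ptIdx N hN k = k := Fin.ext (by rw [ptIdx_val hN k hk1]; omega)
    rw [hpt]
    have h : k = ptIdx N hN k := hpt.symm
    have hc : cB N hN k = 1 := by simp only [cB, if_pos h]
    have hd : dB N hN k = 0 := by simp only [dB, if_pos h]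
    simp only [Bmat, hc, hd, hpt]
    by_cases ha : a = k <;> simp [ha]
  · have hlt : (k : ℕ) < N - (k : ℕ) := by omega
    have hne : k ≠ ptIdx N hN k := by
      intro hh
      have := ptIdx_val hN k hk1
      rw [← hh] at this
      omega
    obtain ⟨hcc, hdd⟩ := cB_dB_conj hN k hne hlt
    simp only [Bmat, ptIdx_invol]
    rw [star_add, apply_ite (star : ℂ → ℂ), apply_ite (star : ℂ → ℂ), ← hcc, ← hdd, star_zero]
    ring

lemma Bmat_unitary : Bmat N hN ∈ Matrix.unitaryGroup (Fin N) ℂ := by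
  rw [Matrix.mem_unitaryGroup_iff']
  ext j k
  rw [Matrix.mul_apply, Matrix.one_apply]
  simp only [Matrix.star_apply]
  exact Bmat_col_orth hN j k

lemma Bmat_diag_comm (ν : Fin N → ℂ) (hν : ∀ k, ν (ptIdx N hN k) = ν k) :
    Matrix.diagonal ν * Bmat N hN = Bmat N hN * Matrix.diagonal ν := by
  ext a k
  rw [Matrix.diagonal_mul, Matrix.mul_diagonal]
  by_cases hak : a = k
  · rw [hak, mul_comm]
  · by_cases hapt : a = ptIdx N hN k
    · rw [hapt, hν k, mul_comm]
    · simp [Bmat, hak, hapt]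

lemma Bmat_col_zero (a : Fin N) : Bmat N hN a ⟨0, hN⟩ = if a = ⟨0, hN⟩ then 1 else 0 := by
  have hpt : ptIdx N hN ⟨0, hN⟩ = ⟨0, hN⟩ := ptIdx_zero hN _ rfl
  have h : (⟨0, hN⟩ : Fin N) = ptIdx N hN ⟨0, hN⟩ := hpt.symm
  have hc : cB N hN ⟨0, hN⟩ = 1 := by simp only [cB, if_pos h]
  have hd : dB N hN ⟨0, hN⟩ = 0 := by simp only [dB, if_pos h]
  simp only [Bmat, hc, hd, hpt]
  by_cases ha : a = (⟨0, hN⟩ : Fin N) <;> simp [ha]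

end Bsec


set_option maxHeartbeats 1000000 in
/-- Let `L` be real symmetric, positive semidefinite, with `0` a simple
eigenvalue whose eigenvector is `(1/√N)·𝟏`. If at most one nonzero eigenvalue of `L` has
odd multiplicity, then there exists a unitary matrix `U` whose columns are (orthonormal)
eigenvectors of `L` with first column `(1/√N)·𝟏` and `u_k = conj (u_{N+2-k})` for
`k = 2, …, ⌊N/2⌋+1` (with 1-based indexing; below indices are 0-based). -/
theorem exists_symmetric_eigenbasis (N : ℕ) (hN : 1 ≤ N)
    (L : Matrix (Fin N) (Fin N) ℝ) (hSym : L.IsSymm) (hPSD : L.PosSemidef)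
    (hone : L.mulVec (fun _ => (1 : ℝ)) = 0)
    (h0simple :
      Module.finrank ℂ
        (Module.End.eigenspace (Matrix.toLin' (L.map Complex.ofReal)) 0) = 1)
    (hodd : {lam : ℂ | lam ≠ 0 ∧
      Odd (Module.finrank ℂ
        (Module.End.eigenspace (Matrix.toLin' (L.map Complex.ofReal)) lam))}.Subsingleton) :
    ∃ U : Matrix (Fin N) (Fin N) ℂ, U ∈ Matrix.unitaryGroup (Fin N) ℂ ∧
      (∃ μ : Fin N → ℂ, L.map Complex.ofReal * U = U * Matrix.diagonal μ) ∧
      (∀ n, U n ⟨0, hN⟩ = (Real.sqrt N : ℂ)⁻¹) ∧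
      (∀ (k : Fin N) (hk1 : 1 ≤ (k : ℕ)) (hk2 : (k : ℕ) ≤ N / 2),
        ∀ n, U n k = star (U n ⟨N - (k : ℕ), by omega⟩)) := by
  classical
  have hN0 : 0 < N := hN
  -- spectral theorem over ℝ
  have hherm : L.IsHermitian := by
    show Lᴴ = L
    ext i j
    rw [Matrix.conjTranspose_apply, star_trivial]
    exact congrFun (congrFun hSym i) j
  set V : Matrix (Fin N) (Fin N) ℝ := ↑hherm.eigenvectorUnitary with hVdef
  set μ : Fin N → ℝ := hherm.eigenvalues with hμdef
  have hVst : star V * V = 1 := Matrix.mem_unitaryGroup_iff'.mp hherm.eigenvectorUnitary.2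
  have hLV : L * V = V * Matrix.diagonal μ := by
    have hst := hherm.spectral_theorem
    have hid : (RCLike.ofReal ∘ μ : Fin N → ℝ) = μ := by
      funext i; simp [RCLike.ofReal]
    calc L * V = (V * Matrix.diagonal μ * star V) * V := by rw [← hid]; conv_lhs => rw [hst, Unitary.conjStarAlgAut_apply]
      _ = V * Matrix.diagonal μ * (star V * V) := by rw [mul_assoc]
      _ = V * Matrix.diagonal μ := by rw [hVst, mul_one]
  -- complexification
  have hcoe : ⇑Complex.ofRealHom = Complex.ofReal := rfl
  have hmapmul : ∀ (A B : Matrix (Fin N) (Fin N) ℝ),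
      (A * B).map Complex.ofReal = A.map Complex.ofReal * B.map Complex.ofReal := by
    intro A B
    rw [← hcoe, Matrix.map_mul]
  have hstarmap : ∀ (A : Matrix (Fin N) (Fin N) ℝ),
      star (A.map Complex.ofReal) = (star A).map Complex.ofReal := by
    intro A
    ext a b
    simp [Matrix.star_apply, Matrix.map_apply, Complex.conj_ofReal]
  have hmapone : (1 : Matrix (Fin N) (Fin N) ℝ).map Complex.ofReal = 1 :=
    Matrix.map_one _ Complex.ofReal_zero Complex.ofReal_one
  set Lc : Matrix (Fin N) (Fin N) ℂ := L.map Complex.ofReal with hLcdef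
  set Vc : Matrix (Fin N) (Fin N) ℂ := V.map Complex.ofReal with hVcdef
  have hVcst : star Vc * Vc = 1 := by
    rw [hVcdef, hstarmap, ← hmapmul, hVst, hmapone]
  have hLVc : Lc * Vc = Vc * Matrix.diagonal (fun i => (μ i : ℂ)) := by
    have := congrArg (fun M => Matrix.map M Complex.ofReal) hLV
    rw [hmapmul, hmapmul] at this
    rw [hLcdef, hVcdef, this, Matrix.diagonal_map Complex.ofReal_zero]
  -- counting eigenvalue multiplicities
  have hcardC : ∀ lam : ℂ,
      Module.finrank ℂ (Module.End.eigenspace (Matrix.toLin' Lc) lam)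
        = Fintype.card {i // (μ i : ℂ) = lam} :=
    fun lam => aux_finrank_eigenspace_of_diagonalization hN0 Lc (star Vc) Vc hVcst _ hLVc lam
  have hcardR : ∀ lam : ℝ,
      Module.finrank ℝ (Module.End.eigenspace (Matrix.toLin' L) lam)
        = Fintype.card {i // μ i = lam} :=
    fun lam => aux_finrank_eigenspace_of_diagonalization hN0 L (star V) V hVst _ hLV lam
  have hcard0 : Fintype.card {i // μ i = 0} = 1 := by
    have h1 := hcardC 0
    rw [h0simple] at h1
    have h2 : Fintype.card {i // (μ i : ℂ) = 0} = Fintype.card {i // μ i = 0} :=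
      Fintype.card_congr (Equiv.subtypeEquivRight (fun i => by
        simp [Complex.ofReal_eq_zero]))
    rw [← h2]
    exact h1.symm
  obtain ⟨⟨i₀, hi₀⟩, hi₀uniq⟩ := Fintype.card_eq_one_iff.mp hcard0
  have hμuniq : ∀ j, μ j = 0 → j = i₀ := by
    intro j hj
    have := hi₀uniq ⟨j, hj⟩
    exact congrArg Subtype.val this
  -- the 0-eigenvector is proportional to the all-ones vector
  set x : Fin N → ℝ := fun n => V n i₀ with hxdef
  have hx_mem : x ∈ Module.End.eigenspace (Matrix.toLin' L) 0 := by
    rw [Module.End.mem_eigenspace_iff]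
    have := aux_col_eigen L V μ hLV i₀
    rw [hi₀] at this
    exact this
  have hone_mem : (fun _ => (1 : ℝ)) ∈ Module.End.eigenspace (Matrix.toLin' L) 0 := by
    rw [Module.End.mem_eigenspace_iff, Matrix.toLin'_apply, hone]
    simp
  have hxx : ∑ n, x n * x n = 1 := by
    have h1 := congrFun (congrFun hVst i₀) i₀
    rw [Matrix.mul_apply, Matrix.one_apply_eq] at h1
    rw [← h1]
    apply Finset.sum_congr rfl
    intro n _
    rw [Matrix.star_apply, star_trivial]
  have hx0 : x ≠ 0 := by
    intro h
    rw [h] at hxx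
    simp at hxx
  have heigR1 : Module.finrank ℝ (Module.End.eigenspace (Matrix.toLin' L) 0) = 1 := by
    rw [hcardR 0, hcard0]
  have hspan : Module.End.eigenspace (Matrix.toLin' L) 0 = Submodule.span ℝ {x} := by
    symm
    apply Submodule.eq_of_le_of_finrank_le
    · rw [Submodule.span_singleton_le_iff_mem]
      exact hx_mem
    · rw [heigR1, finrank_span_singleton hx0]
  obtain ⟨c, hc⟩ : ∃ c : ℝ, (fun _ => (1 : ℝ)) = c • x := by
    have := hone_mem
    rw [hspan, Submodule.mem_span_singleton] at this
    obtain ⟨a, ha⟩ := this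
    exact ⟨a, ha.symm⟩
  have hcx : ∀ n, c * x n = 1 := by
    intro n
    have := congrFun hc n
    simpa using this.symm
  have hcne : c ≠ 0 := by
    intro h
    have := hcx ⟨0, hN0⟩
    rw [h] at this
    simp at this
  have hc2 : c * c = (N : ℝ) := by
    have h1 : ∑ n : Fin N, (c * x n) * (c * x n) = (N : ℝ) := by
      simp [hcx]
    have h2 : ∑ n : Fin N, (c * x n) * (c * x n) = (c * c) * ∑ n, x n * x n := by
      rw [Finset.mul_sum]
      apply Finset.sum_congr rfl
      intro n _
      ring
    rw [h2, hxx, mul_one] at h1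
    exact h1
  set ε : ℝ := if 0 ≤ c then 1 else -1 with hεdef
  have hεc : ε * c = Real.sqrt N := by
    rw [← hc2, Real.sqrt_mul_self_eq_abs]
    by_cases h : 0 ≤ c
    · rw [hεdef, if_pos h, one_mul, abs_of_nonneg h]
    · rw [hεdef, if_neg h, abs_of_neg (lt_of_not_ge h)]
      ring
  have hεε : ε * ε = 1 := by
    by_cases h : 0 ≤ c <;> simp [hεdef, h]
  have hεinv : ε⁻¹ = ε := by
    rcases le_or_gt 0 c with h | h
    · simp [hεdef, h]
    · rw [hεdef, if_neg (not_le.mpr h)]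
      norm_num
  have hεx : ∀ n, ε * x n = (Real.sqrt N)⁻¹ := by
    intro n
    have hxn : x n = c⁻¹ := by
      field_simp
      linear_combination hcx n
    rw [hxn, ← hεc, mul_inv, hεinv]
  -- build the palindromic enumeration
  set l1 : List (Fin N) := (List.finRange N).erase i₀ with hl1def
  have hi₀mem : i₀ ∈ List.finRange N := List.mem_finRange i₀
  have hperm1 : (List.finRange N).Perm (i₀ :: l1) := List.perm_cons_erase hi₀mem
  have hcount_split : ∀ y : ℝ, (((List.finRange N)).map μ).count y
      = ((l1.map μ).count y) + (if μ i₀ = y then 1 else 0) := by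
    intro y
    rw [(hperm1.map μ).count_eq]
    rw [List.map_cons, List.count_cons]
    simp
  have hsub1 : {y : ℝ | Odd ((l1.map μ).count y)}.Subsingleton := by
    have hmem : ∀ y, Odd ((l1.map μ).count y) →
        (y ≠ 0 ∧ Odd (Fintype.card {i // μ i = y})) := by
      intro y hy
      have hsplit := hcount_split y
      rw [aux_count_map_finRange] at hsplit
      by_cases h0 : y = 0
      · exfalso
        subst h0
        rw [hcard0, if_pos hi₀] at hsplit
        have : (l1.map μ).count 0 = 0 := by omega
        rw [this] at hy
        simp at hy
      · have : μ i₀ ≠ y := by rw [hi₀]; exact fun h => h0 h.symm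
        rw [if_neg this, add_zero] at hsplit
        exact ⟨h0, hsplit ▸ hy⟩
    intro y hy z hz
    obtain ⟨hy0, hyodd⟩ := hmem y hy
    obtain ⟨hz0, hzodd⟩ := hmem z hz
    have hcardy : Fintype.card {i // (μ i : ℂ) = (y : ℂ)} = Fintype.card {i // μ i = y} :=
      Fintype.card_congr (Equiv.subtypeEquivRight (fun i => Complex.ofReal_inj))
    have hcardz : Fintype.card {i // (μ i : ℂ) = (z : ℂ)} = Fintype.card {i // μ i = z} :=
      Fintype.card_congr (Equiv.subtypeEquivRight (fun i => Complex.ofReal_inj))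
    have hyC : ((y : ℂ) : ℂ) ∈ {lam : ℂ | lam ≠ 0 ∧
        Odd (Module.finrank ℂ (Module.End.eigenspace (Matrix.toLin' (L.map Complex.ofReal)) lam))} := by
      refine ⟨by simpa [Complex.ofReal_eq_zero] using hy0, ?_⟩
      rw [show L.map Complex.ofReal = Lc from rfl, hcardC, hcardy]
      exact hyodd
    have hzC : ((z : ℂ) : ℂ) ∈ {lam : ℂ | lam ≠ 0 ∧
        Odd (Module.finrank ℂ (Module.End.eigenspace (Matrix.toLin' (L.map Complex.ofReal)) lam))} := by
      refine ⟨by simpa [Complex.ofReal_eq_zero] using hz0, ?_⟩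
      rw [show L.map Complex.ofReal = Lc from rfl, hcardC, hcardz]
      exact hzodd
    exact Complex.ofReal_inj.mp (hodd hyC hzC)
  obtain ⟨l3, hl3perm, hl3pal⟩ := aux_exists_palindrome μ l1.length l1 rfl hsub1
  set lfull : List (Fin N) := i₀ :: l3 with hlfulldef
  have hlfullperm : lfull.Perm (List.finRange N) := (hl3perm.cons i₀).trans hperm1.symm
  have hlfulllen : lfull.length = N := by
    rw [hlfullperm.length_eq, List.length_finRange]
  have hl3len : l3.length = N - 1 := by
    have : lfull.length = l3.length + 1 := by simp [hlfulldef]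
    omega
  have hnodup : lfull.Nodup := hlfullperm.nodup_iff.mpr (List.nodup_finRange N)
  have hltlen : ∀ k : Fin N, (k : ℕ) < lfull.length := fun k => by
    rw [hlfulllen]; exact k.2
  set e : Fin N → Fin N := fun k => lfull.get ⟨k, hltlen k⟩ with hedef
  have heinj : Function.Injective e := by
    intro a b hab
    have h := List.nodup_iff_injective_get.mp hnodup hab
    exact Fin.ext (Fin.mk_eq_mk.mp h)
  have he0 : e ⟨0, hN0⟩ = i₀ := rfl
  have hegetk : ∀ (m : Fin N) (hm : 1 ≤ (m : ℕ)),
      e m = l3.get ⟨(m : ℕ) - 1, by omega⟩ := by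
    intro m hm
    obtain ⟨mv, hmv⟩ : ∃ mv, (m : ℕ) = mv + 1 := ⟨(m : ℕ) - 1, by omega⟩
    have hmN : (m : ℕ) < N := m.2
    have hb : mv < l3.length := by omega
    have h1 : e m = lfull.get ⟨mv + 1, by rw [hlfulllen]; omega⟩ :=
      congrArg lfull.get (Fin.ext hmv)
    have h2 := List.get_of_eq hlfulldef (⟨mv + 1, by rw [hlfulllen]; omega⟩ : Fin lfull.length)
    have h3 : (i₀ :: l3).get ⟨mv + 1, by simp; omega⟩ = l3.get ⟨mv, hb⟩ := List.get_cons_succ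
    rw [h1, h2, h3]
    exact congrArg l3.get (Fin.ext (by simp; omega))
  have hepair : ∀ k : Fin N, 1 ≤ (k : ℕ) → μ (e (ptIdx N hN0 k)) = μ (e k) := by
    intro k hk
    have hkN : (k : ℕ) < N := k.2
    have hptv : (ptIdx N hN0 k : ℕ) = N - (k : ℕ) := ptIdx_val hN0 k hk
    have hpt1 : 1 ≤ (ptIdx N hN0 k : ℕ) := by omega
    rw [hegetk k hk, hegetk (ptIdx N hN0 k) hpt1]
    have h1 : (ptIdx N hN0 k : ℕ) - 1 = N - (k : ℕ) - 1 := by omega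
    have hb1 : (ptIdx N hN0 k : ℕ) - 1 < l3.length := by omega
    have hb2 : (k : ℕ) - 1 < l3.length := by omega
    have := hl3pal ((ptIdx N hN0 k : ℕ) - 1) ((k : ℕ) - 1) hb1 hb2 (by omega)
    exact this
  set ν : Fin N → ℝ := fun k => μ (e k) with hνdef
  have hν : ∀ k, ν (ptIdx N hN0 k) = ν k := by
    intro k
    rcases Nat.eq_zero_or_pos (k : ℕ) with h | h
    · rw [ptIdx_zero hN0 k h]
    · exact hepair k h
  set s : Fin N → ℝ := fun k => if (k : ℕ) = 0 then ε else 1 with hsdef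
  have hs1 : ∀ k, s k * s k = 1 := by
    intro k
    by_cases hk : (k : ℕ) = 0
    · simp [hsdef, hk, hεε]
    · simp [hsdef, hk]
  set W : Matrix (Fin N) (Fin N) ℝ := Matrix.of (fun n k => s k * V n (e k)) with hWdef
  have hWst : star W * W = 1 := by
    ext j k
    rw [Matrix.mul_apply, Matrix.one_apply]
    have hterm : ∀ n, (star W) j n * W n k = (s j * s k) * (V n (e j) * V n (e k)) := by
      intro n
      rw [Matrix.star_apply, star_trivial]
      show W n j * W n k = _
      rw [hWdef]
      simp only [Matrix.of_apply]
      ring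
    rw [Finset.sum_congr rfl (fun n _ => hterm n), ← Finset.mul_sum]
    have hVV : ∑ n, V n (e j) * V n (e k) = if e j = e k then 1 else 0 := by
      have h1 := congrFun (congrFun hVst (e j)) (e k)
      rw [Matrix.mul_apply, Matrix.one_apply] at h1
      rw [← h1]
      apply Finset.sum_congr rfl
      intro n _
      rw [Matrix.star_apply, star_trivial]
    rw [hVV]
    by_cases hjk : j = k
    · subst hjk
      rw [if_pos rfl, if_pos rfl, mul_one]
      exact hs1 j
    · rw [if_neg hjk, if_neg (fun hh => hjk (heinj hh)), mul_zero]
  have hLW : L * W = W * Matrix.diagonal ν := by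
    ext n k
    rw [Matrix.mul_apply, Matrix.mul_diagonal]
    have hcol : ∑ a, L n a * W a k = s k * ((L * V) n (e k)) := by
      rw [Matrix.mul_apply, Finset.mul_sum]
      apply Finset.sum_congr rfl
      intro a _
      rw [hWdef]
      simp only [Matrix.of_apply]
      ring
    rw [hcol, hLV, Matrix.mul_diagonal]
    rw [hWdef]
    simp only [Matrix.of_apply]
    rw [hνdef]
    ring
  set Wc : Matrix (Fin N) (Fin N) ℂ := W.map Complex.ofReal with hWcdef
  have hWcst : star Wc * Wc = 1 := by
    rw [hWcdef, hstarmap, ← hmapmul, hWst, hmapone]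
  have hLWc : Lc * Wc = Wc * Matrix.diagonal (fun k => (ν k : ℂ)) := by
    have := congrArg (fun M => Matrix.map M Complex.ofReal) hLW
    rw [hmapmul, hmapmul] at this
    rw [hLcdef, hWcdef, this, Matrix.diagonal_map Complex.ofReal_zero]
  have hνc : ∀ k, (fun k => ((ν k : ℝ) : ℂ)) (ptIdx N hN0 k) = (fun k => ((ν k : ℝ) : ℂ)) k := by
    intro k
    simp only
    rw [hν k]
  set B : Matrix (Fin N) (Fin N) ℂ := Bmat N hN0 with hBdef
  refine ⟨Wc * B, ?_, ⟨fun k => ((ν k : ℝ) : ℂ), ?_⟩, ?_, ?_⟩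
  · exact mul_mem (Matrix.mem_unitaryGroup_iff'.mpr hWcst) (Bmat_unitary hN0)
  · calc L.map Complex.ofReal * (Wc * B) = (Lc * Wc) * B := by rw [← mul_assoc]
      _ = Wc * (Matrix.diagonal (fun k => ((ν k : ℝ) : ℂ)) * B) := by
          rw [hLWc, mul_assoc]
      _ = Wc * (B * Matrix.diagonal (fun k => ((ν k : ℝ) : ℂ))) := by
          rw [Bmat_diag_comm hN0 _ hνc]
      _ = Wc * B * Matrix.diagonal (fun k => ((ν k : ℝ) : ℂ)) := by rw [mul_assoc]
  · intro n
    rw [Matrix.mul_apply]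
    have hterm : ∀ a, Wc n a * B a ⟨0, hN⟩ = if a = (⟨0, hN⟩ : Fin N) then Wc n a else 0 := by
      intro a
      rw [hBdef, Bmat_col_zero hN0 a]
      by_cases ha : a = (⟨0, hN⟩ : Fin N) <;> simp [ha]
    rw [Finset.sum_congr rfl (fun a _ => hterm a), Finset.sum_ite_eq' Finset.univ]
    rw [if_pos (Finset.mem_univ _)]
    rw [hWcdef]
    simp only [Matrix.map_apply]
    rw [hWdef]
    simp only [Matrix.of_apply]
    have hs0 : s ⟨0, hN⟩ = ε := by simp [hsdef]
    rw [hs0, he0]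
    rw [show V n i₀ = x n from rfl, hεx n]
    rw [Complex.ofReal_inv]
  · intro k hk1 hk2 n
    have hkN : (k : ℕ) < N := k.2
    have hidx : (⟨N - (k : ℕ), by omega⟩ : Fin N) = ptIdx N hN0 k :=
      Fin.ext (by rw [ptIdx_val hN0 k hk1])
    rw [hidx, Matrix.mul_apply, Matrix.mul_apply, star_sum]
    apply Finset.sum_congr rfl
    intro a _
    rw [star_mul']
    have hstW : star (Wc n a) = Wc n a := by
      rw [hWcdef]
      simp [Matrix.map_apply, Complex.conj_ofReal]
    rw [hstW, hBdef, ← Bmat_conj hN0 k hk1 hk2 a]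
end

section
/- Let N ≥ 1 and let U ∈ ℂ^{N×N} be unitary with columns u_1, …, u_N satisfying u_1 = (1/√N)·𝟏 and u_k = conj(u_{N+2−k}) for k = 2, …, ⌊N/2⌋+1. Then there exists a vector a ∈ ℂ^N with pairwise distinct components such that |a_k| = 1 for all k and U·diag(a)·U⁻¹ is a real matrix; that is, a normal atomic filter exists. -/
/-- If `U` is unitary with first column `(1/√N)·𝟏` and columns satisfying
`u_k = conj (u_{N+2-k})` for `k = 2, …, ⌊N/2⌋+1` (1-based; 0-based below), then there
exists `a` with pairwise distinct unimodular components such that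
`U * diagonal a * U⁻¹` is a real matrix, i.e. a normal atomic filter exists. -/
theorem exists_normal_atomic_filter (N : ℕ) (hN : 1 ≤ N)
    (U : Matrix (Fin N) (Fin N) ℂ) (hU : U ∈ Matrix.unitaryGroup (Fin N) ℂ)
    (hu1 : ∀ n, U n ⟨0, hN⟩ = (Real.sqrt N : ℂ)⁻¹)
    (hsymm : ∀ (k : Fin N) (hk1 : 1 ≤ (k : ℕ)) (hk2 : (k : ℕ) ≤ N / 2),
      ∀ n, U n k = star (U n ⟨N - (k : ℕ), by omega⟩)) :
    ∃ a : Fin N → ℂ, Function.Injective a ∧ (∀ k, ‖a k‖ = 1) ∧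
      ∀ i j, ((U * Matrix.diagonal a * U⁻¹) i j).im = 0 := by
  have hNR : (N : ℝ) ≠ 0 := by positivity
  -- the integer "frequencies"
  set c : Fin N → ℤ := fun k =>
    if 2 * (k : ℕ) = N then (N : ℤ) else if 2 * (k : ℕ) < N then (k : ℤ)
      else (k : ℤ) - N with hc
  -- the eigenvalues
  set a : Fin N → ℂ := fun k =>
    Complex.exp ((Real.pi * (c k : ℝ) / N : ℝ) * Complex.I) with ha
  -- bounds on c
  have hcb : ∀ k : Fin N, -(N : ℤ) < c k ∧ c k ≤ N := by
    intro k
    have := k.isLt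
    simp only [hc]
    split_ifs <;> constructor <;> omega
  -- c is injective
  have hcinj : Function.Injective c := by
    intro k k' h
    have hk := k.isLt
    have hk' := k'.isLt
    simp only [hc] at h
    ext
    split_ifs at h <;> omega
  -- a is injective
  have hainj : Function.Injective a := by
    intro k k' h
    simp only [ha] at h
    rw [Complex.exp_eq_exp_iff_exists_int] at h
    obtain ⟨n, hn⟩ := h
    have him := congrArg Complex.im hn
    simp [Complex.add_im, Complex.mul_im] at him
    -- π * c k / N = π * c k' / N + n * (2 * π)
    have hpi := Real.pi_ne_zero
    have hkey : Real.pi * (c k : ℝ) = Real.pi * ((c k' : ℝ) + n * (2 * N)) := by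
      field_simp at him
      rw [him]; ring
    have hkey2 : (c k : ℝ) = (c k' : ℝ) + n * (2 * N) := mul_left_cancel₀ hpi hkey
    have hkeyZ : c k = c k' + n * (2 * N) := by exact_mod_cast hkey2
    have h1 := hcb k
    have h2 := hcb k'
    have hNZ : (1 : ℤ) ≤ N := by exact_mod_cast hN
    have hn0 : n = 0 := by
      by_contra hne
      rcases lt_or_gt_of_ne hne with h | h
      · have hle : n * (2 * (N : ℤ)) ≤ (-1) * (2 * N) :=
          mul_le_mul_of_nonneg_right (by omega) (by omega)
        linarith
      · have hle : (1 : ℤ) * (2 * N) ≤ n * (2 * (N : ℤ)) :=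
          mul_le_mul_of_nonneg_right (by omega) (by omega)
        linarith
    rw [hn0] at hkeyZ
    simp at hkeyZ
    exact hcinj hkeyZ
  -- unimodular
  have habs : ∀ k, ‖a k‖ = 1 := by
    intro k
    simp [ha, Complex.norm_exp]
  -- the involution on indices
  set f : Fin N → Fin N := fun k =>
    if h : (k : ℕ) = 0 then k else ⟨N - (k : ℕ), by have := k.isLt; omega⟩ with hf
  have hfinv : Function.Involutive f := by
    intro k
    have hk := k.isLt
    simp only [hf]
    split_ifs with h1 h2
    · rfl
    · exfalso; simp at h2; omega
    · ext; simp; omega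
  -- conjugation symmetry of a
  have hA : ∀ k, a (f k) = star (a k) := by
    intro k
    have hk := k.isLt
    have hstar : ∀ r : ℝ, star (Complex.exp ((r : ℂ) * Complex.I))
        = Complex.exp ((-r : ℝ) * Complex.I) := by
      intro r
      have h1 : ((-r : ℝ) : ℂ) * Complex.I = (starRingEnd ℂ) ((r : ℂ) * Complex.I) := by
        rw [map_mul, Complex.conj_ofReal, Complex.conj_I]
        push_cast
        ring
      rw [h1, Complex.exp_conj]
      rfl
    have hak : ∀ m, a m = Complex.exp ((Real.pi * (c m : ℝ) / N : ℝ) * Complex.I) :=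
      fun m => rfl
    rw [hak, hak, hstar]
    by_cases hmid : 2 * (k : ℕ) = N
    · -- f k = k and a k = exp(π I) = -1
      have hfk : f k = k := by
        simp only [hf]
        split_ifs with h
        · rfl
        · ext; simp; omega
      rw [hfk]
      have hck : c k = (N : ℤ) := by simp [hc, hmid]
      have : (Real.pi * (c k : ℝ) / N : ℝ) = Real.pi := by
        rw [hck]; field_simp; norm_cast
      rw [this]
      have h1 : Complex.exp ((Real.pi : ℂ) * Complex.I) = -1 := Complex.exp_pi_mul_I
      rw [h1]
      have h2 : Complex.exp (((-Real.pi : ℝ) : ℂ) * Complex.I) = -1 := by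
        have : ((-Real.pi : ℝ) : ℂ) * Complex.I = -(Real.pi * Complex.I) := by
          push_cast; ring
        rw [this, Complex.exp_neg, h1]
        norm_num
      rw [h2]
    · -- -c (f k) = c k
      have hcfk : c (f k) = -c k := by
        by_cases h0 : (k : ℕ) = 0
        · have hfk : f k = k := by simp [hf, h0]
          rw [hfk]
          simp [hc, h0]
          omega
        · have hfk : f k = ⟨N - (k : ℕ), by omega⟩ := by simp [hf, h0]
          rw [hfk]
          simp only [hc]
          have h1 : (1 : ℕ) ≤ (k : ℕ) := by omega
          split_ifs <;> push_cast <;> omega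
      congr 1
      rw [hcfk]
      push_cast
      ring
  -- column symmetry of U
  have hcol : ∀ (n j : Fin N), star (U n j) = U n (f j) := by
    intro n j
    have hj := j.isLt
    by_cases h0 : (j : ℕ) = 0
    · have hj0 : j = ⟨0, hN⟩ := by ext; exact h0
      have hfj : f j = j := by simp [hf, h0]
      rw [hfj, hj0, hu1]
      rw [← Complex.ofReal_inv]
      exact Complex.conj_ofReal _
    · have hfj : f j = ⟨N - (j : ℕ), by omega⟩ := by simp [hf, h0]
      rw [hfj]
      by_cases hle : (j : ℕ) ≤ N / 2
      · rw [hsymm j (by omega) hle n, star_star]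
      · -- apply hsymm to N - j
        have h1 : 1 ≤ N - (j : ℕ) := by omega
        have h2 : N - (j : ℕ) ≤ N / 2 := by omega
        have := hsymm ⟨N - (j : ℕ), by omega⟩ h1 h2 n
        simp only at this
        have hj' : (⟨N - (N - (j : ℕ)), by omega⟩ : Fin N) = j := by
          ext; simp; omega
        rw [hj'] at this
        rw [this]
  -- U⁻¹ = Uᴴ
  have hUinv : U⁻¹ = U.conjTranspose := by
    apply Matrix.inv_eq_left_inv
    have := Matrix.mem_unitaryGroup_iff'.mp hU
    simpa [Matrix.star_eq_conjTranspose] using this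
  refine ⟨a, hainj, habs, ?_⟩
  intro i j
  rw [hUinv]
  have hH : (U * Matrix.diagonal a * U.conjTranspose) i j
      = ∑ k, U i k * a k * star (U j k) := by
    rw [Matrix.mul_apply]
    simp [Matrix.mul_diagonal, Matrix.conjTranspose_apply, mul_comm, mul_assoc, mul_left_comm]
  rw [hH, ← Complex.conj_eq_iff_im]
  rw [map_sum]
  let e := Function.Involutive.toPerm f hfinv
  rw [← Equiv.sum_comp e (fun k => U i k * a k * star (U j k))]
  apply Finset.sum_congr rfl
  intro k _
  have he : (e k : Fin N) = f k := rfl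
  have hconv : ∀ z : ℂ, (starRingEnd ℂ) z = star z := fun _ => rfl
  simp only [he, hconv, star_mul', star_star]
  rw [hcol i k, ← hA k, hcol j (f k), hfinv k]
end

section
/- Let N ≥ 1 and let W ∈ ℝ^{N×N} be a symmetric matrix (the weighted adjacency matrix of an undirected graph). Let D = diag(d_1, …, d_N) with d_i = Σ_{j=1}^N w_{ij}, let L = D − W, and let U ∈ ℂ^{N×N} be a unitary matrix with L = U·Λ·U* for a diagonal matrix Λ = diag(λ_1, …, λ_N) and with first column u_1 = (1/√N)·𝟏. Then there exists a ∈ ℂ^N such that W = U·diag(a)·U⁻¹ (i.e., W is a graph filter) if and only if d_1 = d_2 = … = d_N (i.e., the graph is regular). -/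
/-- For a symmetric weighted adjacency matrix `W` with degrees `d`,
Laplacian `L = D - W`, and a unitary diagonalization `L = U Λ U*` with first column of
`U` equal to `(1/√N)·𝟏`, the matrix `W` is a graph filter (i.e. `W = U·diag(a)·U⁻¹`
for some `a`) iff the graph is regular (all degrees equal). -/
theorem adjacency_is_filter_iff_regular (N : ℕ) (hN : 1 ≤ N)
    (W : Matrix (Fin N) (Fin N) ℝ) (hW : W.IsSymm)
    (d : Fin N → ℝ) (hd : ∀ i, d i = ∑ j, W i j)
    (L : Matrix (Fin N) (Fin N) ℝ) (hL : L = Matrix.diagonal d - W)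
    (U : Matrix (Fin N) (Fin N) ℂ) (hU : U ∈ Matrix.unitaryGroup (Fin N) ℂ)
    (lam : Fin N → ℂ)
    (hLU : L.map Complex.ofReal = U * Matrix.diagonal lam * U.conjTranspose)
    (hu1 : ∀ n, U n ⟨0, hN⟩ = (Real.sqrt N : ℂ)⁻¹) :
    (∃ a : Fin N → ℂ, W.map Complex.ofReal = U * Matrix.diagonal a * U⁻¹) ↔
      ∀ i j, d i = d j := by
  have hstar : U.conjTranspose * U = 1 := by
    simpa [Matrix.star_eq_conjTranspose] using hU.1
  have hstar' : U * U.conjTranspose = 1 := by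
    simpa [Matrix.star_eq_conjTranspose] using hU.2
  have hUinv : U⁻¹ = U.conjTranspose := Matrix.inv_eq_left_inv hstar
  have hs : ((Real.sqrt N : ℂ))⁻¹ ≠ 0 := by
    have : (0:ℝ) < Real.sqrt N := Real.sqrt_pos.mpr (by exact_mod_cast Nat.lt_of_lt_of_le Nat.zero_lt_one hN)
    simp [Complex.ofReal_ne_zero, ne_of_gt this]
  constructor
  · rintro ⟨a, ha⟩
    rw [hUinv] at ha
    have hcol : W.map Complex.ofReal * U = U * Matrix.diagonal a := by
      rw [ha, Matrix.mul_assoc, Matrix.mul_assoc, hstar, Matrix.mul_one]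
    have key : ∀ i : Fin N, (d i : ℂ) * ((Real.sqrt N : ℂ))⁻¹
        = ((Real.sqrt N : ℂ))⁻¹ * a ⟨0, hN⟩ := by
      intro i
      have := congrFun (congrFun hcol i) ⟨0, hN⟩
      rw [Matrix.mul_diagonal, hu1] at this
      simp only [Matrix.mul_apply, Matrix.map_apply, hu1] at this
      rw [hd i]
      push_cast
      rw [Finset.sum_mul]
      exact this
    intro i j
    have : (d i : ℂ) * ((Real.sqrt N : ℂ))⁻¹ = (d j : ℂ) * ((Real.sqrt N : ℂ))⁻¹ := by
      rw [key i, key j]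
    have := mul_right_cancel₀ hs this
    exact_mod_cast this
  · intro h
    set i0 : Fin N := ⟨0, hN⟩
    refine ⟨fun j => (d i0 : ℂ) - lam j, ?_⟩
    rw [hUinv]
    have hdiag : Matrix.diagonal (fun j => (d i0 : ℂ) - lam j)
        = ((d i0 : ℂ) • (1 : Matrix (Fin N) (Fin N) ℂ)) - Matrix.diagonal lam := by
      ext i j
      by_cases hij : i = j <;> simp [Matrix.diagonal, hij, Matrix.one_apply]
    rw [hdiag, Matrix.mul_sub, Matrix.sub_mul, ← hLU]
    have h1 : U * ((d i0 : ℂ) • (1 : Matrix (Fin N) (Fin N) ℂ)) * U.conjTranspose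
        = (d i0 : ℂ) • (1 : Matrix (Fin N) (Fin N) ℂ) := by
      rw [Matrix.mul_smul, Matrix.mul_one, Matrix.smul_mul, hstar']
    rw [h1]
    have hWmap : W.map Complex.ofReal
        = ((d i0 : ℂ) • (1 : Matrix (Fin N) (Fin N) ℂ)) - L.map Complex.ofReal := by
      ext i j
      have hLij : L i j = (Matrix.diagonal d) i j - W i j := by rw [hL]; simp
      by_cases hij : i = j
      · subst hij
        simp [Matrix.map_apply, hLij, Matrix.diagonal, Matrix.one_apply, h i0 i]
      · simp [Matrix.map_apply, hLij, Matrix.diagonal_apply_ne _ hij, Matrix.one_apply_ne hij]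
    rw [hWmap]
end

section
/- Let N ≥ 1, J ≥ 1, let U ∈ ℂ^{N×N} be unitary with columns u_1, …, u_N, let g ∈ ℂ^N with ĝ := U⁻¹ g, and let A = (a_1, …, a_J) ∈ ℂ^{N×J} be a matrix whose N row vectors are orthonormal, i.e. Σ_{j=1}^J conj(a_j(l))·a_j(l') = δ_{l,l'} for all l, l' = 1, …, N. For j = 1, …, J and k = 1, …, N define the time-frequency atom g_{a_j,k} := (H_{a_j} g) ⊙ u_k, where H_{a_j} = U·diag(a_j)·U⁻¹ and ⊙ is the entrywise (Hadamard) product, and define C_n := Σ_{l=1}^N |ĝ(l)|²·|u_l(n)|² for n = 1, …, N. If C_n > 0 for all n, then for every f ∈ ℂ^N and every n = 1, …, N: f(n) = (1/C_n)·Σ_{j=1}^J Σ_{k=1}^N ⟨f, g_{a_j,k}⟩ · g_{a_j,k}(n), and moreover α·‖f‖₂² ≤ Σ_{j=1}^J Σ_{k=1}^N |⟨f, g_{a_j,k}⟩|² ≤ β·‖f‖₂², where α = min_{1≤n≤N} C_n and β = max_{1≤n≤N} C_n. -/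
/-- Frame and reconstruction theorem for windowed Fourier time-frequency
atoms `g_{a_j,k} = (H_{a_j} g) ⊙ u_k` built from a matrix `A = (a_1, …, a_J)` whose `N`
rows are orthonormal. If `C_n := Σ_l |ĝ(l)|²|u_l(n)|² > 0` for all `n`, then every
`f` satisfies the reconstruction formula and the frame inequalities with bounds
`α = min_n C_n`, `β = max_n C_n`. -/
theorem windowed_fourier_frame (N J : ℕ) (hN : 1 ≤ N) (hJ : 1 ≤ J)
    (U : Matrix (Fin N) (Fin N) ℂ) (hU : U ∈ Matrix.unitaryGroup (Fin N) ℂ)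
    (g : Fin N → ℂ) (a : Fin J → Fin N → ℂ)
    (horth : ∀ l l' : Fin N,
      ∑ j : Fin J, star (a j l) * a j l' = if l = l' then 1 else 0)
    (ghat : Fin N → ℂ) (hghat : ghat = U⁻¹.mulVec g)
    (atom : Fin J → Fin N → Fin N → ℂ)
    (hatom : ∀ j k n,
      atom j k n = (U * Matrix.diagonal (a j) * U⁻¹).mulVec g n * U n k)
    (C : Fin N → ℝ)
    (hC : ∀ n, C n = ∑ l, ‖ghat l‖ ^ 2 * ‖U n l‖ ^ 2)
    (hCpos : ∀ n, 0 < C n) :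
    (∀ (f : Fin N → ℂ) (n : Fin N),
      f n = ((C n : ℂ))⁻¹ *
        ∑ j, ∑ k, (∑ m, f m * star (atom j k m)) * atom j k n) ∧
    (∀ f : Fin N → ℂ,
      (Finset.univ.inf' ⟨⟨0, hN⟩, Finset.mem_univ _⟩ C) *
          ∑ n, ‖f n‖ ^ 2 ≤
        ∑ j, ∑ k, ‖∑ m, f m * star (atom j k m)‖ ^ 2 ∧
      ∑ j, ∑ k, ‖∑ m, f m * star (atom j k m)‖ ^ 2 ≤
        (Finset.univ.sup' ⟨⟨0, hN⟩, Finset.mem_univ _⟩ C) *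
          ∑ n, ‖f n‖ ^ 2) := by
  have habs : ∀ z : ℂ, ((‖z‖ : ℂ)) ^ 2 = z * star z := by
    intro z
    rw [Complex.star_def, Complex.mul_conj]
    norm_cast
    exact Complex.sq_norm z
  have hUU : U * star U = 1 := Matrix.mem_unitaryGroup_iff.mp hU
  -- row orthonormality of U
  have hcol : ∀ m n : Fin N, ∑ k, star (U m k) * U n k = if m = n then 1 else 0 := by
    intro m n
    have h := congrFun (congrFun hUU n) m
    simp only [Matrix.mul_apply, Matrix.star_apply, Matrix.one_apply] at h
    calc ∑ k, star (U m k) * U n k = ∑ k, U n k * star (U m k) := by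
          simp [mul_comm]
      _ = if n = m then 1 else 0 := h
      _ = if m = n then 1 else 0 := by simp [eq_comm]
  -- expansion of the filtered window
  have hHg : ∀ (j : Fin J) (n : Fin N),
      (U * Matrix.diagonal (a j) * U⁻¹).mulVec g n = ∑ l, U n l * (a j l * ghat l) := by
    intro j n
    rw [hghat, Matrix.mul_assoc, ← Matrix.mulVec_mulVec, ← Matrix.mulVec_mulVec]
    simp only [Matrix.mulVec, dotProduct, Matrix.diagonal_apply, ite_mul, zero_mul,
      Finset.sum_ite_eq, Finset.mem_univ, if_pos]
  -- key identity
  have key : ∀ m n : Fin N, (∑ j, ∑ k, star (atom j k m) * atom j k n)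
      = if m = n then (C n : ℂ) else 0 := by
    intro m n
    have expand : ∀ j : Fin J, (∑ k, star (atom j k m) * atom j k n)
        = (star ((U * Matrix.diagonal (a j) * U⁻¹).mulVec g m)
            * ((U * Matrix.diagonal (a j) * U⁻¹).mulVec g n))
          * (if m = n then 1 else 0) := by
      intro j
      rw [← hcol m n, Finset.mul_sum]
      refine Finset.sum_congr rfl fun k _ => ?_
      simp only [hatom, star_mul']
      ring
    rw [Finset.sum_congr rfl fun j _ => expand j, ← Finset.sum_mul]
    rcases eq_or_ne m n with rfl | hmn
    · simp only [if_pos rfl, mul_one]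
      have hS : ∀ j : Fin J,
          star ((U * Matrix.diagonal (a j) * U⁻¹).mulVec g m)
            * ((U * Matrix.diagonal (a j) * U⁻¹).mulVec g m)
          = ∑ l, ∑ l', ((star (U m l) * star (ghat l)) * (U m l' * ghat l'))
              * (star (a j l) * a j l') := by
        intro j
        rw [hHg, star_sum, Finset.sum_mul_sum]
        refine Finset.sum_congr rfl fun l _ => Finset.sum_congr rfl fun l' _ => ?_
        simp only [star_mul']
        ring
      rw [Finset.sum_congr rfl fun j _ => hS j, Finset.sum_comm]
      have hl : ∀ l : Fin N,
          (∑ j : Fin J, ∑ l', ((star (U m l) * star (ghat l)) * (U m l' * ghat l'))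
              * (star (a j l) * a j l'))
          = ((‖ghat l‖ : ℂ) ^ 2 * (‖U m l‖ : ℂ) ^ 2) := by
        intro l
        rw [Finset.sum_comm]
        have h1 : ∀ l' : Fin N,
            (∑ j : Fin J, ((star (U m l) * star (ghat l)) * (U m l' * ghat l'))
                * (star (a j l) * a j l'))
            = ((star (U m l) * star (ghat l)) * (U m l' * ghat l'))
                * (if l = l' then 1 else 0) := by
          intro l'
          rw [← horth l l', Finset.mul_sum]
        rw [Finset.sum_congr rfl fun l' _ => h1 l']
        simp only [mul_ite, mul_one, mul_zero, Finset.sum_ite_eq, Finset.mem_univ, if_pos]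
        rw [habs, habs]
        ring
      rw [Finset.sum_congr rfl fun l _ => hl l, hC]
      push_cast
      ring
    · simp [hmn]
  have hCne : ∀ n : Fin N, (C n : ℂ) ≠ 0 := fun n => by
    exact_mod_cast (hCpos n).ne'
  -- reconstruction sum
  have hrec : ∀ (f : Fin N → ℂ) (n : Fin N),
      (∑ j, ∑ k, (∑ m, f m * star (atom j k m)) * atom j k n) = f n * (C n : ℂ) := by
    intro f n
    calc ∑ j, ∑ k, (∑ m, f m * star (atom j k m)) * atom j k n
        = ∑ j, ∑ k, ∑ m, f m * (star (atom j k m) * atom j k n) := by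
          refine Finset.sum_congr rfl fun j _ => Finset.sum_congr rfl fun k _ => ?_
          rw [Finset.sum_mul]
          exact Finset.sum_congr rfl fun m _ => by ring
      _ = ∑ j, ∑ m, ∑ k, f m * (star (atom j k m) * atom j k n) :=
          Finset.sum_congr rfl fun j _ => Finset.sum_comm
      _ = ∑ m, ∑ j, ∑ k, f m * (star (atom j k m) * atom j k n) := Finset.sum_comm
      _ = ∑ m, f m * ∑ j, ∑ k, star (atom j k m) * atom j k n := by
          refine Finset.sum_congr rfl fun m _ => ?_
          rw [Finset.mul_sum]
          refine Finset.sum_congr rfl fun j _ => ?_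
          rw [Finset.mul_sum]
      _ = ∑ m, f m * (if m = n then (C n : ℂ) else 0) :=
          Finset.sum_congr rfl fun m _ => by rw [key]
      _ = f n * (C n : ℂ) := by
          simp [mul_ite]
  constructor
  · intro f n
    rw [hrec f n, mul_comm (f n), ← mul_assoc, inv_mul_cancel₀ (hCne n), one_mul]
  · intro f
    -- total energy identity
    have hsum : (∑ j, ∑ k, ‖∑ m, f m * star (atom j k m)‖ ^ 2)
        = ∑ n, ‖f n‖ ^ 2 * C n := by
      have hcx : ((∑ j, ∑ k, ‖∑ m, f m * star (atom j k m)‖ ^ 2 : ℝ) : ℂ)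
          = ((∑ n, ‖f n‖ ^ 2 * C n : ℝ) : ℂ) := by
        push_cast
        calc (∑ j, ∑ k, ((‖∑ m, f m * star (atom j k m)‖ : ℂ)) ^ 2)
            = ∑ j, ∑ k, (∑ m, f m * star (atom j k m))
                * star (∑ m, f m * star (atom j k m)) := by
              refine Finset.sum_congr rfl fun j _ => Finset.sum_congr rfl fun k _ => ?_
              exact habs _
          _ = ∑ j, ∑ k, ∑ n, star (f n) * ((∑ m, f m * star (atom j k m)) * atom j k n) := by
              refine Finset.sum_congr rfl fun j _ => Finset.sum_congr rfl fun k _ => ?_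
              rw [star_sum, Finset.mul_sum]
              refine Finset.sum_congr rfl fun n _ => ?_
              simp only [star_mul', star_star]
              ring
          _ = ∑ j, ∑ n, ∑ k, star (f n) * ((∑ m, f m * star (atom j k m)) * atom j k n) :=
              Finset.sum_congr rfl fun j _ => Finset.sum_comm
          _ = ∑ n, ∑ j, ∑ k, star (f n) * ((∑ m, f m * star (atom j k m)) * atom j k n) :=
              Finset.sum_comm
          _ = ∑ n, star (f n) * ∑ j, ∑ k, (∑ m, f m * star (atom j k m)) * atom j k n := by
              refine Finset.sum_congr rfl fun n _ => ?_
              rw [Finset.mul_sum]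
              refine Finset.sum_congr rfl fun j _ => ?_
              rw [Finset.mul_sum]
          _ = ∑ n, star (f n) * (f n * (C n : ℂ)) :=
              Finset.sum_congr rfl fun n _ => by rw [hrec]
          _ = ∑ n, ((‖f n‖ : ℂ)) ^ 2 * (C n : ℂ) := by
              refine Finset.sum_congr rfl fun n _ => ?_
              rw [habs]
              ring
      exact_mod_cast hcx
    rw [hsum]
    constructor
    · rw [Finset.mul_sum]
      refine Finset.sum_le_sum fun n _ => ?_
      rw [mul_comm]
      exact mul_le_mul_of_nonneg_left
        (Finset.inf'_le _ (Finset.mem_univ n)) (by positivity)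
    · rw [Finset.mul_sum]
      refine Finset.sum_le_sum fun n _ => ?_
      calc ‖f n‖ ^ 2 * C n
          ≤ ‖f n‖ ^ 2 * Finset.univ.sup' _ C :=
            mul_le_mul_of_nonneg_left (Finset.le_sup' _ (Finset.mem_univ n)) (by positivity)
        _ = _ := by ring
end

section
/- Let N ≥ 1 and let a_1, …, a_N be pairwise distinct complex numbers. The matrix A ∈ ℂ^{N×N} with entries A_{k,j} = (1/√N)·a_k^{j−1} (k, j = 1, …, N) is unitary if and only if there exist a permutation matrix P ∈ ℂ^{N×N} and a diagonal matrix C = diag(1, c, c², …, c^{N−1}) with |c| = 1 such that A = P·U·C, where U is the discrete Fourier basis matrix with entries U_{n,k} = (1/√N)·ω^{(n−1)(k−1)}, ω = e^{2πi/N}. -/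
open Complex Finset

private lemma aux_real_sum (N : ℕ) (hN : 2 ≤ N) (x : ℝ) (hx : 0 ≤ x)
    (h : ∑ j ∈ range N, x ^ j = N) : x = 1 := by
  by_contra hx1
  rcases lt_or_gt_of_ne hx1 with hlt | hgt
  · have : ∑ j ∈ range N, x ^ j < ∑ j ∈ range N, (1:ℝ) ^ j := by
      refine Finset.sum_lt_sum (fun i _ => ?_) ⟨1, Finset.mem_range.2 (by omega), ?_⟩
      · exact pow_le_pow_left₀ hx hlt.le i |>.trans (by simp)
      · simpa using hlt
    simp [h] at this
  · have : ∑ j ∈ range N, (1:ℝ) ^ j < ∑ j ∈ range N, x ^ j := by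
      refine Finset.sum_lt_sum (fun i _ => ?_) ⟨1, Finset.mem_range.2 (by omega), ?_⟩
      · simpa using one_le_pow₀ hgt.le
      · simpa using hgt
    simp [h] at this

private lemma aux_geom_zero {N : ℕ} (hN : 1 ≤ N) {z : ℂ} (hz : z ≠ 1) :
    (∑ j ∈ range N, z ^ j = 0) ↔ z ^ N = 1 := by
  rw [geom_sum_eq hz, div_eq_zero_iff, sub_eq_zero, sub_eq_zero]
  simp [hz]

private lemma aux_unitary_iff (N : ℕ) (hN : 1 ≤ N) (a : Fin N → ℂ)
    (A : Matrix (Fin N) (Fin N) ℂ)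
    (hA : ∀ k j, A k j = (Real.sqrt N : ℂ)⁻¹ * a k ^ (j : ℕ)) :
    A ∈ Matrix.unitaryGroup (Fin N) ℂ ↔
      ∀ k l, (∑ j ∈ range N, (a k * (starRingEnd ℂ) (a l)) ^ j)
        = if k = l then (N : ℂ) else 0 := by
  have hN0 : (N : ℂ) ≠ 0 := Nat.cast_ne_zero.2 (by omega)
  have hsq : ((Real.sqrt N : ℂ))⁻¹ * ((Real.sqrt N : ℂ))⁻¹ = (N : ℂ)⁻¹ := by
    rw [← mul_inv, ← Complex.ofReal_mul, Real.mul_self_sqrt (by positivity),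
      Complex.ofReal_natCast]
  have key : ∀ k l, (A * star A) k l
      = (N : ℂ)⁻¹ * ∑ j ∈ range N, (a k * (starRingEnd ℂ) (a l)) ^ j := by
    intro k l
    rw [Matrix.mul_apply, Finset.mul_sum, ← Fin.sum_univ_eq_sum_range
      (fun j => (N : ℂ)⁻¹ * (a k * (starRingEnd ℂ) (a l)) ^ j)]
    refine Finset.sum_congr rfl fun j _ => ?_
    rw [Matrix.star_apply, hA, hA, star_def, map_mul, map_pow, map_inv₀, conj_ofReal,
      mul_pow]
    rw [← hsq]; ring
  rw [Matrix.mem_unitaryGroup_iff, ← Matrix.ext_iff]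
  constructor
  · intro h k l
    have := h k l
    rw [key, Matrix.one_apply] at this
    have := congrArg (fun z => (N : ℂ) * z) this
    simp only [← mul_assoc, mul_inv_cancel₀ hN0, one_mul, mul_ite, mul_one, mul_zero] at this
    exact this
  · intro h k l
    rw [key, h, Matrix.one_apply]
    split <;> simp [inv_mul_cancel₀ hN0]

/-- For pairwise distinct `a_1, …, a_N`, the matrix
`A k j = (1/√N)·a_k^{j-1}` is unitary iff `A = P·U·C` for some permutation matrix `P`
and diagonal matrix `C = diag(1, c, …, c^{N-1})` with `|c| = 1`, where `U` is the
discrete Fourier basis matrix. -/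
theorem vandermonde_unitary_iff (N : ℕ) (hN : 1 ≤ N)
    (a : Fin N → ℂ) (ha : Function.Injective a)
    (A : Matrix (Fin N) (Fin N) ℂ)
    (hA : ∀ k j, A k j = (Real.sqrt N : ℂ)⁻¹ * a k ^ (j : ℕ)) :
    A ∈ Matrix.unitaryGroup (Fin N) ℂ ↔
      ∃ (σ : Equiv.Perm (Fin N)) (c : ℂ), ‖c‖ = 1 ∧
        A = (σ.toPEquiv.toMatrix : Matrix (Fin N) (Fin N) ℂ) *
            (Matrix.of fun n k : Fin N => (Real.sqrt N : ℂ)⁻¹ *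
              Complex.exp (2 * Real.pi * Complex.I / N) ^ ((n : ℕ) * (k : ℕ))) *
            Matrix.diagonal (fun j : Fin N => c ^ (j : ℕ)) := by
  set ζ : ℂ := Complex.exp (2 * Real.pi * Complex.I / N) with hζdef
  haveI : NeZero N := ⟨by omega⟩
  have hprim : IsPrimitiveRoot ζ N := Complex.isPrimitiveRoot_exp N (by omega)
  have hζN : ζ ^ N = 1 := hprim.pow_eq_one
  have hunit : ∀ w : ℂ, ‖w‖ = 1 → w * (starRingEnd ℂ) w = 1 := by
    intro w hw
    rw [Complex.mul_conj, Complex.normSq_eq_norm_sq, hw]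
    norm_num
  have habsζ : ‖ζ‖ = 1 := by
    have h1 : ‖ζ‖ ^ N = 1 := by rw [← norm_pow, hζN, norm_one]
    have := (pow_left_strictMonoOn₀ (M₀ := ℝ) (n := N) (by omega)).injOn
    exact this (norm_nonneg ζ) (by norm_num : (1:ℝ) ∈ {a : ℝ | 0 ≤ a}) (by simp [h1])
  have hRHS : ∀ (σ : Equiv.Perm (Fin N)) (c : ℂ) (k j : Fin N),
      ((σ.toPEquiv.toMatrix : Matrix (Fin N) (Fin N) ℂ) *
        (Matrix.of fun n k : Fin N => (Real.sqrt N : ℂ)⁻¹ * ζ ^ ((n : ℕ) * (k : ℕ))) *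
        Matrix.diagonal (fun j : Fin N => c ^ (j : ℕ))) k j
      = (Real.sqrt N : ℂ)⁻¹ * (ζ ^ ((σ k : Fin N) : ℕ) * c) ^ (j : ℕ) := by
    intro σ c k j
    rw [Matrix.mul_diagonal, PEquiv.toMatrix_toPEquiv_mul]
    simp only [Matrix.submatrix_apply, Matrix.of_apply, id_eq]
    rw [pow_mul, mul_pow, mul_assoc]
  constructor
  · intro hU
    rw [aux_unitary_iff N hN a A hA] at hU
    by_cases hN1 : N = 1
    · refine ⟨1, 1, by simp, ?_⟩
      ext k j
      rw [hRHS, hA]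
      have hj : (j : ℕ) = 0 := by omega
      simp [hj]
    · have hN2 : 2 ≤ N := by omega
      set i0 : Fin N := ⟨0, by omega⟩ with hi0
      have habs1 : ∀ k, a k * (starRingEnd ℂ) (a k) = 1 := by
        intro k
        have h1 := hU k k
        rw [if_pos rfl] at h1
        rw [show a k * (starRingEnd ℂ) (a k) = ((Complex.normSq (a k) : ℝ) : ℂ) from
          Complex.mul_conj _] at h1
        have h2 : ∑ j ∈ range N, (Complex.normSq (a k)) ^ j = (N : ℝ) := by
          exact_mod_cast h1
        have h3 := aux_real_sum N hN2 _ (Complex.normSq_nonneg _) h2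
        rw [Complex.mul_conj, h3]
        norm_num
      have hc0 : (starRingEnd ℂ) (a i0) ≠ 0 := by
        intro h
        have := habs1 i0
        rw [h, mul_zero] at this
        exact zero_ne_one this
      have hrootk : ∀ k, (a k * (starRingEnd ℂ) (a i0)) ^ N = 1 := by
        intro k
        by_cases hk : k = i0
        · rw [hk, habs1 i0, one_pow]
        · have hz1 : a k * (starRingEnd ℂ) (a i0) ≠ 1 := by
            intro h
            have : a k * (starRingEnd ℂ) (a i0) = a i0 * (starRingEnd ℂ) (a i0) := by
              rw [h, habs1 i0]
            exact hk (ha (mul_right_cancel₀ hc0 this))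
          have h2 := hU k i0
          rw [if_neg hk] at h2
          exact (aux_geom_zero hN hz1).mp h2
      have hex : ∀ k, ∃ i : Fin N, ζ ^ (i : ℕ) = a k * (starRingEnd ℂ) (a i0) := by
        intro k
        obtain ⟨i, hi, hiq⟩ := hprim.eq_pow_of_pow_eq_one (hrootk k)
        exact ⟨⟨i, hi⟩, hiq⟩
      choose f hf using hex
      have hfinj : Function.Injective f := by
        intro k l h
        apply ha
        have h1 := hf k
        rw [h, hf l] at h1
        exact mul_right_cancel₀ hc0 h1.symm
      set σ : Equiv.Perm (Fin N) :=
        Equiv.ofBijective f (Finite.injective_iff_bijective.mp hfinj) with hσ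
      have habsc : ‖a i0‖ = 1 := by
        have h1 := habs1 i0
        rw [Complex.mul_conj, Complex.normSq_eq_norm_sq] at h1
        have h2 : ‖a i0‖ ^ 2 = 1 := by exact_mod_cast h1
        nlinarith [norm_nonneg (a i0)]
      have hak : ∀ k, a k = ζ ^ ((σ k : Fin N) : ℕ) * a i0 := by
        intro k
        have h1 : ζ ^ ((f k : Fin N) : ℕ) * a i0 = a k * ((starRingEnd ℂ) (a i0) * a i0) := by
          rw [hf k]; ring
        rw [mul_comm ((starRingEnd ℂ) (a i0)) (a i0), habs1 i0, mul_one] at h1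
        have : σ k = f k := rfl
        rw [this, h1]
      exact ⟨σ, a i0, habsc, by
        ext k j
        rw [hRHS σ (a i0) k j, hA, ← hak k]⟩
  · rintro ⟨σ, c, hc, heq⟩
    set b : Fin N → ℂ := fun k => ζ ^ ((σ k : Fin N) : ℕ) * c with hb
    have hAb : ∀ k j, A k j = (Real.sqrt N : ℂ)⁻¹ * b k ^ (j : ℕ) := by
      intro k j
      rw [heq, hRHS σ c k j]
    rw [aux_unitary_iff N hN b A hAb]
    intro k l
    have hcc : c * (starRingEnd ℂ) c = 1 := hunit c hc
    have hzz : ζ * (starRingEnd ℂ) ζ = 1 := hunit ζ habsζ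
    have hz : b k * (starRingEnd ℂ) (b l)
        = ζ ^ ((σ k : Fin N) : ℕ) * ((starRingEnd ℂ) ζ) ^ ((σ l : Fin N) : ℕ) := by
      simp only [hb, map_mul, map_pow]
      rw [show ζ ^ ((σ k : Fin N) : ℕ) * c *
        (((starRingEnd ℂ) ζ) ^ ((σ l : Fin N) : ℕ) * (starRingEnd ℂ) c)
        = ζ ^ ((σ k : Fin N) : ℕ) * ((starRingEnd ℂ) ζ) ^ ((σ l : Fin N) : ℕ) *
          (c * (starRingEnd ℂ) c) from by ring, hcc, mul_one]
    by_cases hkl : k = l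
    · subst hkl
      rw [if_pos rfl, hz, ← mul_pow, hzz, one_pow]
      simp
    · rw [if_neg hkl]
      have hzN : (b k * (starRingEnd ℂ) (b l)) ^ N = 1 := by
        rw [hz, mul_pow, ← pow_mul, ← pow_mul, mul_comm ((σ k : Fin N) : ℕ) N,
          mul_comm ((σ l : Fin N) : ℕ) N, pow_mul, pow_mul, hζN, ← map_pow, hζN, map_one,
          one_pow, one_pow, mul_one]
      have hz1 : b k * (starRingEnd ℂ) (b l) ≠ 1 := by
        intro h
        rw [hz] at h
        have h2 : ζ ^ ((σ k : Fin N) : ℕ) * (((starRingEnd ℂ) ζ) * ζ) ^ ((σ l : Fin N) : ℕ)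
            = ζ ^ ((σ l : Fin N) : ℕ) := by
          rw [mul_pow, show ζ ^ ((σ k : Fin N) : ℕ) *
            (((starRingEnd ℂ) ζ) ^ ((σ l : Fin N) : ℕ) * ζ ^ ((σ l : Fin N) : ℕ))
            = ζ ^ ((σ k : Fin N) : ℕ) * ((starRingEnd ℂ) ζ) ^ ((σ l : Fin N) : ℕ) *
              ζ ^ ((σ l : Fin N) : ℕ) from by ring, h, one_mul]
        rw [mul_comm ((starRingEnd ℂ) ζ) ζ, hzz, one_pow, mul_one] at h2
        have h3 := hprim.pow_inj (σ k).isLt (σ l).isLt h2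
        exact hkl (σ.injective (Fin.ext h3))
      exact (aux_geom_zero hN hz1).mpr hzN
end

section
/- Let N ≥ 1, let U ∈ ℂ^{N×N} be unitary with columns u_1, …, u_N, let g ∈ ℂ^N with ĝ := U⁻¹ g, and suppose C_n := Σ_{l=1}^N |ĝ(l)|²·|u_l(n)|² > 0 for all n = 1, …, N. Let ω = e^{2πi/N}, set a := (1, ω, ω², …, ω^{N−1})^T, H_a := U·diag(a)·U⁻¹, and define the time-frequency atoms g_{j,k} := (1/√N)·(H_a^{j−1} g) ⊙ u_k for j, k = 1, …, N. Then these N² atoms constitute a frame of ℂ^N with bounds α = min_n C_n and β = max_n C_n, i.e., α·‖f‖₂² ≤ Σ_{j=1}^N Σ_{k=1}^N |⟨f, g_{j,k}⟩|² ≤ β·‖f‖₂² for all f ∈ ℂ^N, and the reconstruction formula f(n) = (1/C_n)·Σ_{j=1}^N Σ_{k=1}^N ⟨f, g_{j,k}⟩·g_{j,k}(n) holds for every f ∈ ℂ^N and every n = 1, …, N. -/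
/-- With `a = (1, ω, …, ω^{N-1})`, `ω = e^{2πi/N}`, the `N²` atoms
`g_{j,k} = (1/√N)·(H_a^{j-1} g) ⊙ u_k` constitute a frame of `ℂ^N` with bounds
`α = min_n C_n`, `β = max_n C_n`, and the reconstruction formula holds. -/
theorem powers_windowed_fourier_frame (N : ℕ) (hN : 1 ≤ N)
    (U : Matrix (Fin N) (Fin N) ℂ) (hU : U ∈ Matrix.unitaryGroup (Fin N) ℂ)
    (g : Fin N → ℂ) (ghat : Fin N → ℂ) (hghat : ghat = U⁻¹.mulVec g)
    (C : Fin N → ℝ)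
    (hC : ∀ n, C n = ∑ l, ‖ghat l‖ ^ 2 * ‖U n l‖ ^ 2)
    (hCpos : ∀ n, 0 < C n)
    (a : Fin N → ℂ)
    (hadef : ∀ k, a k = Complex.exp (2 * Real.pi * Complex.I * (k : ℕ) / N))
    (atom : Fin N → Fin N → Fin N → ℂ)
    (hatom : ∀ j k n, atom j k n = (Real.sqrt N : ℂ)⁻¹ *
      ((U * Matrix.diagonal a * U⁻¹) ^ (j : ℕ)).mulVec g n * U n k) :
    (∀ f : Fin N → ℂ,
      (Finset.univ.inf' ⟨⟨0, hN⟩, Finset.mem_univ _⟩ C) *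
          ∑ n, ‖f n‖ ^ 2 ≤
        ∑ j, ∑ k, ‖∑ m, f m * star (atom j k m)‖ ^ 2 ∧
      ∑ j, ∑ k, ‖∑ m, f m * star (atom j k m)‖ ^ 2 ≤
        (Finset.univ.sup' ⟨⟨0, hN⟩, Finset.mem_univ _⟩ C) *
          ∑ n, ‖f n‖ ^ 2) ∧
    (∀ (f : Fin N → ℂ) (n : Fin N),
      f n = ((C n : ℂ))⁻¹ *
        ∑ j, ∑ k, (∑ m, f m * star (atom j k m)) * atom j k n) := by
  have hN0 : (N : ℂ) ≠ 0 := by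
    exact_mod_cast Nat.cast_ne_zero.mpr (by omega)
  have hNr : (0:ℝ) ≤ (N:ℝ) := by positivity
  -- unitarity facts
  have hUinv : U⁻¹ = star U := Matrix.inv_eq_left_inv hU.1
  have hUU : U * U⁻¹ = 1 := by rw [hUinv]; exact hU.2
  have hU'U : U⁻¹ * U = 1 := by rw [hUinv]; exact hU.1
  -- row orthonormality
  have hrow : ∀ m n : Fin N, (∑ k, star (U m k) * U n k) = if m = n then 1 else 0 := by
    intro m n
    have h2 := congrFun (congrFun hU.2 m) n
    simp only [Matrix.mul_apply, Matrix.star_eq_conjTranspose,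
      Matrix.conjTranspose_apply, Matrix.one_apply] at h2
    calc (∑ k, star (U m k) * U n k)
        = star (∑ k, U m k * star (U n k)) := by
          rw [star_sum]
          refine Finset.sum_congr rfl (fun k _ => ?_)
          rw [star_mul', star_star]
      _ = if m = n then 1 else 0 := by rw [h2]; split <;> simp
  -- the filtered window
  have hB : ∀ (j : ℕ) (n : Fin N),
      ((U * Matrix.diagonal a * U⁻¹) ^ j).mulVec g n
        = ∑ l, U n l * (a l ^ j * ghat l) := by
    intro j n
    have hpow : (U * Matrix.diagonal a * U⁻¹) ^ j
        = U * Matrix.diagonal (fun l => a l ^ j) * U⁻¹ := by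
      have := Units.conj_pow (⟨U, U⁻¹, hUU, hU'U⟩ : (Matrix (Fin N) (Fin N) ℂ)ˣ)
        (Matrix.diagonal a) j
      have h2 : (U * Matrix.diagonal a * U⁻¹) ^ j = U * Matrix.diagonal (a ^ j) * U⁻¹ := by
        simpa [Matrix.diagonal_pow] using this
      rw [h2]; rfl
    rw [hpow, ← Matrix.mulVec_mulVec, ← Matrix.mulVec_mulVec, ← hghat]
    simp only [Matrix.mulVec, dotProduct, Matrix.diagonal_apply, ite_mul, zero_mul]
    exact Finset.sum_congr rfl (fun l _ => by rw [Finset.sum_ite_eq, if_pos (Finset.mem_univ l)])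
  -- primitive root facts
  have hζ := Complex.isPrimitiveRoot_exp N (by omega)
  have ha : ∀ l : Fin N, a l = Complex.exp (2 * Real.pi * Complex.I / N) ^ (l : ℕ) := by
    intro l
    rw [hadef, ← Complex.exp_nat_mul]
    congr 1
    ring
  have hstar_a : ∀ l : Fin N, star (a l) * a l = 1 := by
    intro l
    rw [hadef, Complex.star_def, ← Complex.exp_conj, ← Complex.exp_add]
    have : (starRingEnd ℂ) (2 * (Real.pi:ℂ) * Complex.I * ((l:ℕ):ℂ) / (N:ℂ))
        = -(2 * (Real.pi:ℂ) * Complex.I * ((l:ℕ):ℂ) / (N:ℂ)) := by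
      simp [map_div₀, Complex.conj_I, map_ofNat]
      ring
    rw [this, neg_add_cancel, Complex.exp_zero]
  have haN : ∀ l : Fin N, a l ^ N = 1 := by
    intro l
    rw [ha l, ← pow_mul, mul_comm (l:ℕ) N, pow_mul, hζ.pow_eq_one, one_pow]
  have hgeom : ∀ l l' : Fin N,
      (∑ j : Fin N, (star (a l) * a l') ^ (j : ℕ)) = if l = l' then (N : ℂ) else 0 := by
    intro l l'
    by_cases h : l = l'
    · subst h
      rw [if_pos rfl]
      calc (∑ j : Fin N, (star (a l) * a l) ^ (j : ℕ))
          = ∑ _j : Fin N, (1:ℂ) :=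
            Finset.sum_congr rfl (fun j _ => by rw [hstar_a l, one_pow])
        _ = (N : ℂ) := by simp
    · have hzN : (star (a l) * a l') ^ N = 1 := by
        rw [mul_pow, ← star_pow, haN, haN]
        simp
      have hz1 : star (a l) * a l' ≠ 1 := by
        intro hcontra
        apply h
        have h3 : a l' = a l := by
          have h5 := congrArg (fun z => a l * z) hcontra
          simp only [mul_one] at h5
          calc a l' = (a l * star (a l)) * a l' := by
                rw [mul_comm (a l) (star (a l)), hstar_a l, one_mul]
            _ = a l := by rw [mul_assoc]; exact h5
        have h4 : Complex.exp (2 * Real.pi * Complex.I / N) ^ (l' : ℕ)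
            = Complex.exp (2 * Real.pi * Complex.I / N) ^ (l : ℕ) := by
          rw [← ha, ← ha, h3]
        exact Fin.ext (hζ.pow_inj l.isLt l'.isLt h4.symm)
      rw [Fin.sum_univ_eq_sum_range (fun j => (star (a l) * a l') ^ j) N,
        geom_sum_eq hz1, hzN]
      simp [if_neg h]
  -- the key orthogonality identity
  have key : ∀ m n : Fin N,
      (∑ j, ∑ k, star (atom j k m) * atom j k n) = if m = n then (C n : ℂ) else 0 := by
    intro m n
    have hs : star ((Real.sqrt N : ℂ)⁻¹) = (Real.sqrt N : ℂ)⁻¹ := by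
      rw [star_inv₀, Complex.star_def, Complex.conj_ofReal]
    have step1 : ∀ j : Fin N,
        (∑ k, star (atom j k m) * atom j k n)
          = (if m = n then 1 else 0) * ((Real.sqrt N : ℂ)⁻¹ * (Real.sqrt N : ℂ)⁻¹
            * (star (((U * Matrix.diagonal a * U⁻¹) ^ (j:ℕ)).mulVec g m)
              * ((U * Matrix.diagonal a * U⁻¹) ^ (j:ℕ)).mulVec g n)) := by
      intro j
      rw [← hrow m n, Finset.sum_mul]
      refine Finset.sum_congr rfl (fun k _ => ?_)
      rw [hatom, hatom, star_mul, star_mul, hs]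
      ring
    rcases eq_or_ne m n with h | h
    · subst h
      rw [if_pos rfl]
      have hsum : (∑ j : Fin N,
          star (((U * Matrix.diagonal a * U⁻¹) ^ (j:ℕ)).mulVec g m)
            * ((U * Matrix.diagonal a * U⁻¹) ^ (j:ℕ)).mulVec g m)
          = (N : ℂ) * (C m : ℂ) := by
        have expand : ∀ j : Fin N,
            star (((U * Matrix.diagonal a * U⁻¹) ^ (j:ℕ)).mulVec g m)
              * ((U * Matrix.diagonal a * U⁻¹) ^ (j:ℕ)).mulVec g m
            = ∑ l, ∑ l', (star (a l) * a l') ^ (j:ℕ)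
                * (star (U m l) * star (ghat l) * (U m l' * ghat l')) := by
          intro j
          rw [hB, star_sum, Finset.sum_mul_sum]
          refine Finset.sum_congr rfl (fun l _ => Finset.sum_congr rfl (fun l' _ => ?_))
          rw [star_mul, star_mul, star_pow, mul_pow]
          ring
        rw [Finset.sum_congr rfl (fun j _ => expand j), Finset.sum_comm]
        have swap2 : ∀ l : Fin N, (∑ j : Fin N, ∑ l', (star (a l) * a l') ^ (j:ℕ)
              * (star (U m l) * star (ghat l) * (U m l' * ghat l')))
            = ∑ l', (if l = l' then (N:ℂ) else 0)
                * (star (U m l) * star (ghat l) * (U m l' * ghat l')) := by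
          intro l
          rw [Finset.sum_comm]
          exact Finset.sum_congr rfl (fun l' _ => by rw [← Finset.sum_mul, hgeom])
        rw [Finset.sum_congr rfl (fun l _ => swap2 l)]
        have diag : ∀ l : Fin N, (∑ l', (if l = l' then (N:ℂ) else 0)
              * (star (U m l) * star (ghat l) * (U m l' * ghat l')))
            = (N:ℂ) * ((star (ghat l) * ghat l) * (star (U m l) * U m l)) := by
          intro l
          rw [Finset.sum_eq_single l]
          · rw [if_pos rfl]; ring
          · intro l' _ hne; rw [if_neg (fun hh => hne hh.symm), zero_mul]
          · intro habs; exact absurd (Finset.mem_univ l) habs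
        rw [Finset.sum_congr rfl (fun l _ => diag l), ← Finset.mul_sum]
        congr 1
        simp only [Complex.star_def, ← Complex.normSq_eq_conj_mul_self]
        rw [hC]
        push_cast
        refine Finset.sum_congr rfl (fun l _ => ?_)
        norm_cast
        rw [Complex.sq_norm, Complex.sq_norm]
      have hsq : ((Real.sqrt N : ℂ)) * ((Real.sqrt N : ℂ)) = (N : ℂ) := by
        norm_cast
        exact_mod_cast Real.mul_self_sqrt hNr
      calc (∑ j, ∑ k, star (atom j k m) * atom j k m)
          = ∑ j : Fin N, (Real.sqrt N : ℂ)⁻¹ * (Real.sqrt N : ℂ)⁻¹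
              * (star (((U * Matrix.diagonal a * U⁻¹) ^ (j:ℕ)).mulVec g m)
                * ((U * Matrix.diagonal a * U⁻¹) ^ (j:ℕ)).mulVec g m) := by
            refine Finset.sum_congr rfl (fun j _ => ?_)
            rw [step1 j, if_pos rfl, one_mul]
        _ = (Real.sqrt N : ℂ)⁻¹ * (Real.sqrt N : ℂ)⁻¹ * ((N:ℂ) * (C m:ℂ)) := by
            rw [← Finset.mul_sum, hsum]
        _ = (C m : ℂ) := by
            rw [← mul_inv, hsq, ← mul_assoc, inv_mul_cancel₀ hN0, one_mul]
    · simp only [step1, if_neg h, zero_mul, Finset.sum_const_zero]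
  -- the reconstruction sum
  have recon : ∀ (f : Fin N → ℂ) (n : Fin N),
      (∑ j, ∑ k, (∑ m, f m * star (atom j k m)) * atom j k n) = f n * (C n : ℂ) := by
    intro f n
    calc (∑ j, ∑ k, (∑ m, f m * star (atom j k m)) * atom j k n)
        = ∑ j, ∑ k, ∑ m, f m * (star (atom j k m) * atom j k n) := by
          refine Finset.sum_congr rfl (fun j _ => Finset.sum_congr rfl (fun k _ => ?_))
          rw [Finset.sum_mul]
          exact Finset.sum_congr rfl (fun m _ => by ring)
      _ = ∑ j, ∑ m, ∑ k, f m * (star (atom j k m) * atom j k n) :=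
          Finset.sum_congr rfl (fun j _ => Finset.sum_comm)
      _ = ∑ m, ∑ j, ∑ k, f m * (star (atom j k m) * atom j k n) := Finset.sum_comm
      _ = ∑ m, f m * (∑ j, ∑ k, star (atom j k m) * atom j k n) := by
          refine Finset.sum_congr rfl (fun m _ => ?_)
          rw [Finset.mul_sum]
          exact Finset.sum_congr rfl (fun j _ => (Finset.mul_sum _ _ _).symm)
      _ = ∑ m, f m * (if m = n then (C n : ℂ) else 0) :=
          Finset.sum_congr rfl (fun m _ => by rw [key])
      _ = f n * (C n : ℂ) := by
          simp [mul_ite, mul_zero, Finset.sum_ite_eq']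
  -- the frame energy identity
  have main : ∀ f : Fin N → ℂ,
      (∑ j, ∑ k, ‖∑ m, f m * star (atom j k m)‖ ^ 2)
        = ∑ m, C m * ‖f m‖ ^ 2 := by
    intro f
    have hcplx : ((∑ j, ∑ k, ‖∑ m, f m * star (atom j k m)‖ ^ 2 : ℝ) : ℂ)
        = ((∑ m, C m * ‖f m‖ ^ 2 : ℝ) : ℂ) := by
      have lhs1 : ((∑ j, ∑ k, ‖∑ m, f m * star (atom j k m)‖ ^ 2 : ℝ) : ℂ)
          = ∑ j, ∑ k, (∑ m, f m * star (atom j k m))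
              * star (∑ m, f m * star (atom j k m)) := by
        push_cast
        refine Finset.sum_congr rfl (fun j _ => Finset.sum_congr rfl (fun k _ => ?_))
        rw [Complex.star_def, Complex.mul_conj]
        norm_cast
        exact Complex.sq_norm _
      have rhs1 : ((∑ m, C m * ‖f m‖ ^ 2 : ℝ) : ℂ)
          = ∑ m, star (f m) * (f m * (C m : ℂ)) := by
        push_cast
        refine Finset.sum_congr rfl (fun m _ => ?_)
        rw [Complex.star_def]
        rw [show (starRingEnd ℂ) (f m) * (f m * (C m:ℂ))
            = ((starRingEnd ℂ) (f m) * f m) * (C m:ℂ) from by ring]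
        rw [← Complex.normSq_eq_conj_mul_self, ← Complex.sq_norm]
        push_cast
        ring
      rw [lhs1, rhs1]
      calc (∑ j, ∑ k, (∑ m, f m * star (atom j k m))
              * star (∑ m, f m * star (atom j k m)))
          = ∑ j, ∑ k, ∑ m, star (f m)
              * ((∑ m', f m' * star (atom j k m')) * atom j k m) := by
            refine Finset.sum_congr rfl (fun j _ => Finset.sum_congr rfl (fun k _ => ?_))
            rw [star_sum, Finset.mul_sum]
            refine Finset.sum_congr rfl (fun m _ => ?_)
            rw [star_mul, star_star]
            ring
        _ = ∑ j, ∑ m, ∑ k, star (f m)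
              * ((∑ m', f m' * star (atom j k m')) * atom j k m) :=
            Finset.sum_congr rfl (fun j _ => Finset.sum_comm)
        _ = ∑ m, ∑ j, ∑ k, star (f m)
              * ((∑ m', f m' * star (atom j k m')) * atom j k m) := Finset.sum_comm
        _ = ∑ m, star (f m) * (∑ j, ∑ k,
              (∑ m', f m' * star (atom j k m')) * atom j k m) := by
            refine Finset.sum_congr rfl (fun m _ => ?_)
            rw [Finset.mul_sum]
            exact Finset.sum_congr rfl (fun j _ => (Finset.mul_sum _ _ _).symm)
        _ = ∑ m, star (f m) * (f m * (C m : ℂ)) :=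
            Finset.sum_congr rfl (fun m _ => by rw [recon])
    exact_mod_cast hcplx
  refine ⟨fun f => ?_, fun f n => ?_⟩
  · rw [main f]
    constructor
    · rw [Finset.mul_sum]
      refine Finset.sum_le_sum (fun m _ => ?_)
      exact mul_le_mul_of_nonneg_right (Finset.inf'_le _ (Finset.mem_univ m)) (by positivity)
    · rw [Finset.mul_sum]
      refine Finset.sum_le_sum (fun m _ => ?_)
      exact mul_le_mul_of_nonneg_right (Finset.le_sup' _ (Finset.mem_univ m)) (by positivity)
  · have hCn0 : (C n : ℂ) ≠ 0 := Complex.ofReal_ne_zero.mpr (hCpos n).ne'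
    rw [recon f n, mul_comm (f n) ((C n : ℂ)), ← mul_assoc, inv_mul_cancel₀ hCn0, one_mul]
end
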